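/- arXiv:1603.01421 — 5 statements merged into one kernel-verified Lean document; each statement's English description precedes it below -/
import Mathlib

section
/- Let (X, ℬ, μ) be a probability space, f: X → X an invertible measure-preserving transformation, 𝒜 a measurable cocycle over f with generator A, and Λ ⊆ X an f-invariant set. Let E(x), F(x) ⊆ ℝ^d, x ∈ Λ, be 𝒜-invariant families of subspaces (i.e. A(x)E(x) ⊆ E(f(x)) and A(x)F(x) ⊆ F(f(x))) such that there exist λ₁ < λ₂, ε > 0 and measurable functions C, C̃: Λ → (0,∞) with: (1) λ₁ + 3ε ≤ λ₂ − 2ε; (2) E(x) ∩ F(x) = {0} for x ∈ Λ; (3) ‖𝒜(x,n)v‖ ≤ C̃(x)e^{(λ₂+ε)n}‖v‖ for all x ∈ Λ, v ∈ E(x) ⊕ F(x), n ≥ 0; (4) ‖𝒜(x,n)v‖ ≥ (1/C(x))e^{(λ₂−ε)n}‖v‖ for all x ∈ Λ, v ∈ F(x), n ≥ 0; (5) ‖𝒜(x,n)v‖ ≤ C(x)e^{(λ₁+ε)n}‖v‖ for all x ∈ Λ, v ∈ E(x), n ≥ 0; (6) C̃(f^m(x)) ≤ C̃(x)e^{ε|m|}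 and C(f^m(x)) ≤ C(x)e^{ε|m|} for all x ∈ Λ, m ∈ ℤ. Then there exists a measurable function K: Λ → (0,∞) satisfying K(f^m(x)) ≤ K(x)e^{5ε|m|} for all x ∈ Λ, m ∈ ℤ, and such that ‖v₁‖ ≤ K(x)‖v₁ + v₂‖ and ‖v₂‖ ≤ K(x)‖v₁ + v₂‖ for every x ∈ Λ, v₁ ∈ E(x) and v₂ ∈ F(x). -/
open Filter MeasureTheory Set

noncomputable section
set_option maxHeartbeats 800000

private lemma max_exp_bound (ε : ℝ) (hε : 0 < ε) (m : ℕ) (cx cy : ℝ)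
    (hcx : 0 < cx) (hcy : 0 < cy) (hc : cy ≤ cx * Real.exp (ε * m)) :
    max 1 (Real.exp ((2/3) * Real.log (2 * cy ^ 2))) ≤
      max 1 (Real.exp ((2/3) * Real.log (2 * cx ^ 2))) * Real.exp (2 * ε * m) := by
  have hem : (1 : ℝ) ≤ Real.exp (2 * ε * m) := Real.one_le_exp (by positivity)
  have hMx : (1 : ℝ) ≤ max 1 (Real.exp ((2/3) * Real.log (2 * cx ^ 2))) := le_max_left _ _
  refine max_le (by nlinarith) ?_
  have hlog : Real.log (2 * cy ^ 2) ≤ Real.log (2 * cx ^ 2) + 2 * (ε * m) := by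
    have h1 : 2 * cy ^ 2 ≤ (2 * cx ^ 2) * Real.exp (2 * (ε * m)) := by
      have hE : 0 < Real.exp (ε * m) := Real.exp_pos _
      have := mul_le_mul hc hc hcy.le (by positivity)
      calc 2 * cy ^ 2 = 2 * (cy * cy) := by ring
        _ ≤ 2 * ((cx * Real.exp (ε * m)) * (cx * Real.exp (ε * m))) := by nlinarith
        _ = (2 * cx ^ 2) * (Real.exp (ε * m) * Real.exp (ε * m)) := by ring
        _ = (2 * cx ^ 2) * Real.exp (2 * (ε * m)) := by
            rw [← Real.exp_add]; ring_nf
    calc Real.log (2 * cy ^ 2) ≤ Real.log ((2 * cx ^ 2) * Real.exp (2 * (ε * m))) :=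
          Real.log_le_log (by positivity) h1
      _ = Real.log (2 * cx ^ 2) + 2 * (ε * m) := by
          rw [Real.log_mul (by positivity) (Real.exp_ne_zero _), Real.log_exp]
  calc Real.exp ((2/3) * Real.log (2 * cy ^ 2))
      ≤ Real.exp ((2/3) * Real.log (2 * cx ^ 2) + 2 * ε * m) := by
        apply Real.exp_le_exp.2; nlinarith
    _ = Real.exp ((2/3) * Real.log (2 * cx ^ 2)) * Real.exp (2 * ε * m) := Real.exp_add _ _
    _ ≤ max 1 (Real.exp ((2/3) * Real.log (2 * cx ^ 2))) * Real.exp (2 * ε * m) := by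
        have := le_max_right (1:ℝ) (Real.exp ((2/3) * Real.log (2 * cx ^ 2)))
        nlinarith [Real.exp_pos (2 * ε * m)]

private lemma K_temper (ε : ℝ) (hε : 0 < ε) (m : ℕ) (cx cy tx ty : ℝ)
    (hcx : 0 < cx) (hcy : 0 < cy) (htx : 0 < tx) (hty : 0 < ty)
    (hc : cy ≤ cx * Real.exp (ε * m)) (ht : ty ≤ tx * Real.exp (ε * m)) :
    2 * cy * ty * max 1 (Real.exp ((2/3) * Real.log (2 * cy ^ 2))) * Real.exp (2 * ε) + 2 ≤
    (2 * cx * tx * max 1 (Real.exp ((2/3) * Real.log (2 * cx ^ 2))) * Real.exp (2 * ε) + 2) *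
      Real.exp (5 * ε * m) := by
  set My := max 1 (Real.exp ((2/3) * Real.log (2 * cy ^ 2))) with hMy_def
  set Mx := max 1 (Real.exp ((2/3) * Real.log (2 * cx ^ 2))) with hMx_def
  have hMy1 : (1 : ℝ) ≤ My := le_max_left _ _
  have hMx1 : (1 : ℝ) ≤ Mx := le_max_left _ _
  have hMb : My ≤ Mx * Real.exp (2 * ε * m) := max_exp_bound ε hε m cx cy hcx hcy hc
  have hE : (0:ℝ) < Real.exp (ε * m) := Real.exp_pos _
  have hE2 : (0:ℝ) < Real.exp (2 * ε) := Real.exp_pos _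
  have h1 : cy * ty ≤ (cx * Real.exp (ε * m)) * (tx * Real.exp (ε * m)) :=
    mul_le_mul hc ht hty.le (by positivity)
  have h2 : cy * ty * My ≤ ((cx * Real.exp (ε * m)) * (tx * Real.exp (ε * m))) *
      (Mx * Real.exp (2 * ε * m)) :=
    mul_le_mul h1 hMb (by linarith) (by positivity)
  have hid : ((cx * Real.exp (ε * m)) * (tx * Real.exp (ε * m))) * (Mx * Real.exp (2 * ε * m))
      = cx * tx * Mx * Real.exp (4 * ε * m) := by
    rw [show (4 : ℝ) * ε * m = ε * m + (ε * m + 2 * ε * m) by ring, Real.exp_add, Real.exp_add]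
    ring
  have h45 : Real.exp (4 * ε * m) ≤ Real.exp (5 * ε * m) := by
    apply Real.exp_le_exp.2; nlinarith [Nat.cast_nonneg (α := ℝ) m]
  have h3 : cy * ty * My ≤ cx * tx * Mx * Real.exp (5 * ε * m) := by
    rw [hid] at h2
    have : 0 ≤ cx * tx * Mx := by positivity
    nlinarith
  have h5 : (1 : ℝ) ≤ Real.exp (5 * ε * m) := Real.one_le_exp (by positivity)
  nlinarith [mul_le_mul_of_nonneg_right h3 hE2.le]

/-- Lemma 2.1 of the paper.  Let `(X, ℬ, μ)` be a probability space, `f` an invertible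
measure-preserving transformation (with inverse `finv`), `𝓐` a measurable cocycle over
`f` and `Λ` an `f`-invariant set.  Let `E(x), F(x) ⊆ ℝ^d`, `x ∈ Λ`, be `𝓐`-invariant
families of subspaces such that there are `λ₁ < λ₂`, `ε > 0` and measurable positive
functions `C, C̃` on `Λ` satisfying the growth conditions (1)–(6).  Then there is a
measurable function `K : Λ → (0, ∞)` with `K(fᵐ(x)) ≤ K(x)e^{5ε|m|}` for `x ∈ Λ`,
`m ∈ ℤ`, and `‖v₁‖ ≤ K(x)‖v₁+v₂‖`, `‖v₂‖ ≤ K(x)‖v₁+v₂‖` for `v₁ ∈ E(x)`, `v₂ ∈ F(x)`. -/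
theorem angle_bound_of_splitting {X : Type*} [MeasurableSpace X]
    (μ : Measure X) [IsProbabilityMeasure μ] {d : ℕ}
    (f finv : X → X) (hf : MeasureTheory.MeasurePreserving f μ μ)
    (hmf : Measurable f) (hmfinv : Measurable finv)
    (hleft : Function.LeftInverse finv f) (hright : Function.RightInverse finv f)
    (𝓐 : X → ℕ → EuclideanSpace ℝ (Fin d) →L[ℝ] EuclideanSpace ℝ (Fin d))
    (h𝓐meas : ∀ (n : ℕ) (v : EuclideanSpace ℝ (Fin d)), Measurable fun x => 𝓐 x n v)
    (h𝓐0 : ∀ x, 𝓐 x 0 = ContinuousLinearMap.id ℝ (EuclideanSpace ℝ (Fin d)))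
    (h𝓐coc : ∀ x n m, 𝓐 x (n + m) = (𝓐 (f^[n] x) m).comp (𝓐 x n))
    (Λ : Set X) (hΛf : MapsTo f Λ Λ) (hΛfinv : MapsTo finv Λ Λ)
    (E F : X → Submodule ℝ (EuclideanSpace ℝ (Fin d)))
    (hEinv : ∀ x ∈ Λ, Submodule.map (𝓐 x 1 : EuclideanSpace ℝ (Fin d) →ₗ[ℝ] EuclideanSpace ℝ (Fin d)) (E x) ≤ E (f x))
    (hFinv : ∀ x ∈ Λ, Submodule.map (𝓐 x 1 : EuclideanSpace ℝ (Fin d) →ₗ[ℝ] EuclideanSpace ℝ (Fin d)) (F x) ≤ F (f x))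
    (lam₁ lam₂ ε : ℝ) (hlam : lam₁ < lam₂) (hε : 0 < ε)
    (C Ct : X → ℝ) (hCmeas : Measurable C) (hCtmeas : Measurable Ct)
    (hCpos : ∀ x ∈ Λ, 0 < C x) (hCtpos : ∀ x ∈ Λ, 0 < Ct x)
    -- (1)
    (hgap : lam₁ + 3 * ε ≤ lam₂ - 2 * ε)
    -- (2)
    (hEF : ∀ x ∈ Λ, E x ⊓ F x = ⊥)
    -- (3)
    (hupper : ∀ x ∈ Λ, ∀ v ∈ E x ⊔ F x, ∀ n : ℕ,
      ‖𝓐 x n v‖ ≤ Ct x * Real.exp ((lam₂ + ε) * n) * ‖v‖)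
    -- (4)
    (hlowerF : ∀ x ∈ Λ, ∀ v ∈ F x, ∀ n : ℕ,
      ‖𝓐 x n v‖ ≥ (C x)⁻¹ * Real.exp ((lam₂ - ε) * n) * ‖v‖)
    -- (5)
    (hupperE : ∀ x ∈ Λ, ∀ v ∈ E x, ∀ n : ℕ,
      ‖𝓐 x n v‖ ≤ C x * Real.exp ((lam₁ + ε) * n) * ‖v‖)
    -- (6)
    (htemp : ∀ x ∈ Λ, ∀ m : ℕ,
      Ct (f^[m] x) ≤ Ct x * Real.exp (ε * m) ∧
      Ct (finv^[m] x) ≤ Ct x * Real.exp (ε * m) ∧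
      C (f^[m] x) ≤ C x * Real.exp (ε * m) ∧
      C (finv^[m] x) ≤ C x * Real.exp (ε * m)) :
    ∃ K : X → ℝ, Measurable K ∧ (∀ x ∈ Λ, 0 < K x) ∧
      (∀ x ∈ Λ, ∀ m : ℕ,
        K (f^[m] x) ≤ K x * Real.exp (5 * ε * m) ∧
        K (finv^[m] x) ≤ K x * Real.exp (5 * ε * m)) ∧
      ∀ x ∈ Λ, ∀ v₁ ∈ E x, ∀ v₂ ∈ F x,
        ‖v₁‖ ≤ K x * ‖v₁ + v₂‖ ∧ ‖v₂‖ ≤ K x * ‖v₁ + v₂‖ := by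
  classical
  set K : X → ℝ := fun x =>
    2 * C x * Ct x * max 1 (Real.exp ((2/3) * Real.log (2 * (C x) ^ 2))) * Real.exp (2 * ε) + 2
    with hK_def
  have hKmeas : Measurable K := by
    apply Measurable.add_const
    apply Measurable.mul_const
    apply Measurable.mul
    · exact (hCmeas.const_mul 2).mul hCtmeas
    · exact measurable_const.max
        (Real.measurable_exp.comp (((Real.measurable_log.comp
          ((hCmeas.pow_const 2).const_mul 2))).const_mul (2/3)))
  have hKterm : ∀ x ∈ Λ,
      0 < 2 * C x * Ct x * max 1 (Real.exp ((2/3) * Real.log (2 * (C x) ^ 2))) *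
        Real.exp (2 * ε) := by
    intro x hx
    have h1 : 0 < 2 * C x := by linarith [hCpos x hx]
    have h2 : 0 < 2 * C x * Ct x := mul_pos h1 (hCtpos x hx)
    have h3 : (0:ℝ) < max 1 (Real.exp ((2/3) * Real.log (2 * (C x) ^ 2))) :=
      lt_of_lt_of_le one_pos (le_max_left _ _)
    exact mul_pos (mul_pos h2 h3) (Real.exp_pos _)
  refine ⟨K, hKmeas, ?_, ?_, ?_⟩
  · intro x hx
    have := hKterm x hx
    simp only [hK_def]
    linarith
  · intro x hx m
    have hxf : f^[m] x ∈ Λ := hΛf.iterate m hx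
    have hxfi : finv^[m] x ∈ Λ := hΛfinv.iterate m hx
    obtain ⟨h1, h2, h3, h4⟩ := htemp x hx m
    constructor
    · exact K_temper ε hε m (C x) (C (f^[m] x)) (Ct x) (Ct (f^[m] x))
        (hCpos x hx) (hCpos _ hxf) (hCtpos x hx) (hCtpos _ hxf) h3 h1
    · exact K_temper ε hε m (C x) (C (finv^[m] x)) (Ct x) (Ct (finv^[m] x))
        (hCpos x hx) (hCpos _ hxfi) (hCtpos x hx) (hCtpos _ hxfi) h4 h2
  · intro x hx v₁ hv₁ v₂ hv₂
    set c := C x with hc_def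
    set t := Ct x with ht_def
    have hc : 0 < c := hCpos x hx
    have ht : 0 < t := hCtpos x hx
    set n : ℕ := ⌈Real.log (2 * c ^ 2) / (3 * ε)⌉₊ with hn_def
    have h3ε : (0:ℝ) < 3 * ε := by linarith
    have hn0 : (0:ℝ) ≤ (n : ℝ) := Nat.cast_nonneg n
    -- (a)  2c² ≤ exp(3εn)
    have ha : 2 * c ^ 2 ≤ Real.exp (3 * ε * n) := by
      have h1 : Real.log (2 * c ^ 2) ≤ 3 * ε * n := by
        have hceil := Nat.le_ceil (Real.log (2 * c ^ 2) / (3 * ε))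
        calc Real.log (2 * c ^ 2) = Real.log (2 * c ^ 2) / (3 * ε) * (3 * ε) := by
              field_simp
          _ ≤ (n : ℝ) * (3 * ε) := mul_le_mul_of_nonneg_right hceil h3ε.le
          _ = 3 * ε * n := by ring
      calc 2 * c ^ 2 = Real.exp (Real.log (2 * c ^ 2)) := (Real.exp_log (by positivity)).symm
        _ ≤ Real.exp (3 * ε * n) := Real.exp_le_exp.2 h1
    -- (b)  exp(2εn) ≤ M * exp(2ε)
    set M := max 1 (Real.exp ((2/3) * Real.log (2 * c ^ 2))) with hM_def
    have hM1 : (1:ℝ) ≤ M := le_max_left _ _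
    have hb : Real.exp (2 * ε * n) ≤ M * Real.exp (2 * ε) := by
      have hE2 : (1:ℝ) ≤ Real.exp (2 * ε) := Real.one_le_exp (by positivity)
      rcases le_or_gt (Real.log (2 * c ^ 2)) 0 with h | h
      · have hnz : n = 0 := by
          rw [hn_def]
          exact Nat.ceil_eq_zero.2 (div_nonpos_of_nonpos_of_nonneg h h3ε.le)
        rw [hnz]
        simp only [Nat.cast_zero, mul_zero, Real.exp_zero]
        nlinarith
      · have hdiv : (0:ℝ) ≤ Real.log (2 * c ^ 2) / (3 * ε) := (div_pos h h3ε).le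
        have hn_lt : (n : ℝ) < Real.log (2 * c ^ 2) / (3 * ε) + 1 := by
          rw [hn_def]; exact Nat.ceil_lt_add_one hdiv
        have harg : 2 * ε * n ≤ (2/3) * Real.log (2 * c ^ 2) + 2 * ε := by
          have h1 : (n : ℝ) * (3 * ε) < Real.log (2 * c ^ 2) + 3 * ε := by
            have := mul_lt_mul_of_pos_right hn_lt h3ε
            calc (n : ℝ) * (3 * ε) < (Real.log (2 * c ^ 2) / (3 * ε) + 1) * (3 * ε) := this
              _ = Real.log (2 * c ^ 2) + 3 * ε := by field_simp
          nlinarith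
        calc Real.exp (2 * ε * n) ≤ Real.exp ((2/3) * Real.log (2 * c ^ 2) + 2 * ε) :=
              Real.exp_le_exp.2 harg
          _ = Real.exp ((2/3) * Real.log (2 * c ^ 2)) * Real.exp (2 * ε) := Real.exp_add _ _
          _ ≤ M * Real.exp (2 * ε) := by
              have := le_max_right (1:ℝ) (Real.exp ((2/3) * Real.log (2 * c ^ 2)))
              nlinarith [Real.exp_pos (2 * ε)]
    -- norm inequalities at time n
    have hmem : v₁ + v₂ ∈ E x ⊔ F x :=
      add_mem (Submodule.mem_sup_left hv₁) (Submodule.mem_sup_right hv₂)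
    have H1 := hlowerF x hx v₂ hv₂ n
    have H2 := hupperE x hx v₁ hv₁ n
    have H3 := hupper x hx (v₁ + v₂) hmem n
    have Hadd : 𝓐 x n (v₁ + v₂) = 𝓐 x n v₁ + 𝓐 x n v₂ := map_add _ _ _
    have Htri : ‖𝓐 x n v₂‖ ≤ ‖𝓐 x n (v₁ + v₂)‖ + ‖𝓐 x n v₁‖ := by
      have h : 𝓐 x n v₂ = 𝓐 x n (v₁ + v₂) - 𝓐 x n v₁ := by rw [Hadd]; abel
      rw [h]; exact norm_sub_le _ _
    have HP : ‖v₁‖ ≤ ‖v₁ + v₂‖ + ‖v₂‖ := by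
      have h : v₁ = (v₁ + v₂) - v₂ := by abel
      calc ‖v₁‖ = ‖(v₁ + v₂) - v₂‖ := by rw [← h]
        _ ≤ ‖v₁ + v₂‖ + ‖v₂‖ := norm_sub_le _ _
    set W := ‖v₁ + v₂‖ with hW_def
    set P := ‖v₁‖ with hP_def
    set Q := ‖v₂‖ with hQ_def
    have hW0 : 0 ≤ W := norm_nonneg _
    have hP0 : 0 ≤ P := norm_nonneg _
    have hQ0 : 0 ≤ Q := norm_nonneg _
    set e1 := Real.exp ((lam₂ - ε) * n) with he1_def
    set e2 := Real.exp ((lam₁ + ε) * n) with he2_def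
    set e3 := Real.exp ((lam₂ + ε) * n) with he3_def
    set e4 := Real.exp (3 * ε * n) with he4_def
    set e5 := Real.exp (2 * ε * n) with he5_def
    have he1 : 0 < e1 := Real.exp_pos _
    have he2 : 0 < e2 := Real.exp_pos _
    have he3 : 0 < e3 := Real.exp_pos _
    have he4 : 0 < e4 := Real.exp_pos _
    have he5 : 0 < e5 := Real.exp_pos _
    -- e2 * e4 ≤ e1
    have he24 : e2 * e4 ≤ e1 := by
      have hexp : e2 * e4 = Real.exp ((lam₁ + ε) * n + 3 * ε * n) := (Real.exp_add _ _).symm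
      rw [hexp, he1_def]
      apply Real.exp_le_exp.2
      nlinarith
    -- e3 = e1 * e5
    have he315 : e3 = e1 * e5 := by
      rw [he3_def, he1_def, he5_def, ← Real.exp_add]
      ring_nf
    -- combined inequality
    have hcomb : c⁻¹ * e1 * Q ≤ t * e3 * W + c * e2 * (W + Q) := by
      have h4 : c⁻¹ * e1 * Q ≤ ‖𝓐 x n v₂‖ := H1
      have h5 : ‖𝓐 x n v₁‖ ≤ c * e2 * P := H2
      have h6 : ‖𝓐 x n (v₁ + v₂)‖ ≤ t * e3 * W := H3
      have h7 : c * e2 * P ≤ c * e2 * (W + Q) :=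
        mul_le_mul_of_nonneg_left HP (by positivity)
      linarith
    -- c * e2 ≤ e1 / (2c)
    have hce2 : c * e2 ≤ e1 / (2 * c) := by
      have h1 : e2 * (2 * c ^ 2) ≤ e2 * e4 := mul_le_mul_of_nonneg_left ha he2.le
      have h2 : e2 * (2 * c ^ 2) ≤ e1 := le_trans h1 he24
      rw [le_div_iff₀ (by linarith : (0:ℝ) < 2 * c)]
      calc c * e2 * (2 * c) = e2 * (2 * c ^ 2) := by ring
        _ ≤ e1 := h2
    -- derive Q ≤ (K - 1) W
    have hQW : Q ≤ (2 * c * t * M * Real.exp (2 * ε) + 1) * W := by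
      have step1 : c⁻¹ * e1 * Q ≤ t * (e1 * e5) * W + (e1 / (2 * c)) * (W + Q) := by
        have h8 : c * e2 * (W + Q) ≤ (e1 / (2 * c)) * (W + Q) :=
          mul_le_mul_of_nonneg_right hce2 (by positivity)
        rw [← he315]
        linarith
      -- multiply by c / e1  (i.e. divide)
      have step2 : Q ≤ c * t * e5 * W + (1/2) * (W + Q) := by
        have hpos : (0:ℝ) < c / e1 := by positivity
        have := mul_le_mul_of_nonneg_left step1 hpos.le
        have hcinv : c / e1 * (c⁻¹ * e1 * Q) = Q := by
          field_simp
        have hrhs : c / e1 * (t * (e1 * e5) * W + (e1 / (2 * c)) * (W + Q))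
            = c * t * e5 * W + (1/2) * (W + Q) := by
          field_simp
        rw [hcinv, hrhs] at this
        exact this
      have step3 : Q ≤ 2 * c * t * e5 * W + W := by linarith
      have step4 : 2 * c * t * e5 * W ≤ 2 * c * t * (M * Real.exp (2 * ε)) * W := by
        apply mul_le_mul_of_nonneg_right _ hW0
        apply mul_le_mul_of_nonneg_left hb (by positivity)
      nlinarith
    have hKx : K x = 2 * c * t * M * Real.exp (2 * ε) + 2 := rfl
    constructor
    · rw [hKx]
      have : Q ≤ (2 * c * t * M * Real.exp (2 * ε) + 1) * W := hQW
      nlinarith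
    · rw [hKx]
      have hterm : 0 < 2 * c * t * M * Real.exp (2 * ε) := by positivity
      nlinarith
end
end

section
/- Let (X, ℬ, μ) be a probability space, f: X → X an invertible ergodic measure-preserving transformation, D: X → [1, ∞) a measurable function, and ψ: X → [0, ∞) an integrable function such that log D(x) − log D(f(x)) ≤ ψ(x) for μ-a.e. x ∈ X. Then lim_{n→∞} (1/n)·log D(f^n(x)) = 0 and lim_{n→∞} (1/n)·log D(f^{−n}(x)) = 0 for μ-a.e. x ∈ X. -/
open Filter MeasureTheory Set ENNReal

noncomputable section

set_option linter.unusedSectionVars false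

namespace TemperedAux

variable {X : Type*} [MeasurableSpace X] (μ : Measure X)
variable {f : X → X} {h : X → ℝ}

/-- Iterated max `R N x = max_{0 ≤ n ≤ N} birkhoffSum f h n x`. -/
def maxSum (f : X → X) (h : X → ℝ) : ℕ → X → ℝ
  | 0 => fun _ => 0
  | (N + 1) => fun x => max (maxSum f h N x) (birkhoffSum f h (N + 1) x)

variable {f : X → X} {h : X → ℝ}

lemma maxSum_nonneg (N : ℕ) (x : X) : 0 ≤ maxSum f h N x := by
  induction N with
  | zero => exact le_rfl
  | succ N ih => exact le_trans ih (le_max_left _ _)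

lemma maxSum_mono (N : ℕ) (x : X) : maxSum f h N x ≤ maxSum f h (N + 1) x :=
  le_max_left _ _

lemma maxSum_mono' {N M : ℕ} (hNM : N ≤ M) (x : X) : maxSum f h N x ≤ maxSum f h M x := by
  induction M, hNM using Nat.le_induction with
  | base => exact le_rfl
  | succ M _ ih => exact le_trans ih (maxSum_mono M x)

lemma integrable_max {μ : Measure X} {u v : X → ℝ} (hu : Integrable u μ) (hv : Integrable v μ) :
    Integrable (fun x => max (u x) (v x)) μ := by
  have := hu.sup hv
  exact this

lemma birkhoffSum_le_maxSum (N : ℕ) (x : X) : birkhoffSum f h N x ≤ maxSum f h N x := by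
  cases N with
  | zero => simp [maxSum, birkhoffSum_zero]
  | succ N => exact le_max_right _ _

lemma maxSum_le (N : ℕ) (x : X) :
    maxSum f h N x ≤ max 0 (h x + maxSum f h N (f x)) := by
  induction N with
  | zero => simp [maxSum]
  | succ N ih =>
      refine max_le ?_ ?_
      · exact le_trans ih (max_le_max le_rfl (by
          exact add_le_add le_rfl (maxSum_mono N (f x))))
      · rw [birkhoffSum_succ' f h N x]
        refine le_max_of_le_right ?_
        exact add_le_add le_rfl (le_trans (birkhoffSum_le_maxSum N (f x)) (maxSum_mono N (f x)))

lemma measurable_birkhoffSum (hfm : Measurable f) (hm : Measurable h) (n : ℕ) :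
    Measurable (birkhoffSum f h n) := by
  unfold birkhoffSum
  exact Finset.measurable_sum _ fun i _ => hm.comp (hfm.iterate i)

lemma measurable_maxSum (hfm : Measurable f) (hm : Measurable h) (N : ℕ) :
    Measurable (maxSum f h N) := by
  induction N with
  | zero => exact measurable_const
  | succ N ih => exact ih.max (measurable_birkhoffSum hfm hm (N + 1))

lemma integrable_birkhoffSum (hf : MeasurePreserving f μ μ) (hm : Measurable h)
    (hi : Integrable h μ) (n : ℕ) : Integrable (birkhoffSum f h n) μ := by
  unfold birkhoffSum
  refine integrable_finset_sum _ fun i _ => ?_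
  exact ((hf.iterate i).integrable_comp hi.aestronglyMeasurable).2 hi

lemma integrable_maxSum [IsFiniteMeasure μ] (hf : MeasurePreserving f μ μ) (hm : Measurable h)
    (hi : Integrable h μ) (N : ℕ) : Integrable (maxSum f h N) μ := by
  induction N with
  | zero => exact integrable_const 0
  | succ N ih => exact integrable_max ih (integrable_birkhoffSum μ hf hm hi (N + 1))

/-- Garsia's maximal ergodic theorem. -/
theorem maximal_ergodic [IsProbabilityMeasure μ] (hf : MeasurePreserving f μ μ)
    (hm : Measurable h) (hi : Integrable h μ) :
    0 ≤ ∫ x in {x | ∃ n : ℕ, 0 < birkhoffSum f h (n + 1) x}, h x ∂μ := by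
  have hfm := hf.measurable
  set E : ℕ → Set X := fun N => {x | 0 < maxSum f h N x} with hE
  have hEmeas : ∀ N, MeasurableSet (E N) :=
    fun N => measurableSet_lt measurable_const (measurable_maxSum hfm hm N)
  have hEmono : Monotone E := fun a b hab x hx =>
    lt_of_lt_of_le hx (maxSum_mono' hab x)
  have hEunion : (⋃ N, E N) = {x | ∃ n : ℕ, 0 < birkhoffSum f h (n + 1) x} := by
    ext x
    simp only [mem_iUnion, mem_setOf_eq, hE]
    constructor
    · rintro ⟨N, hN⟩
      induction N with
      | zero => simp [maxSum] at hN
      | succ N ih =>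
          rcases lt_max_iff.1 hN with h1 | h1
          · exact ih h1
          · exact ⟨N, h1⟩
    · rintro ⟨n, hn⟩
      exact ⟨n + 1, lt_of_lt_of_le hn (birkhoffSum_le_maxSum _ _)⟩
  -- key integral inequality for each N
  have key : ∀ N, 0 ≤ ∫ x in E N, h x ∂μ := by
    intro N
    have hRint := integrable_maxSum μ hf hm hi N
    have hRfint : Integrable (fun x => maxSum f h N (f x)) μ :=
      (hf.integrable_comp hRint.aestronglyMeasurable).2 hRint
    have step1 : ∫ x in E N, (maxSum f h N x - maxSum f h N (f x)) ∂μ ≤ ∫ x in E N, h x ∂μ := by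
      refine setIntegral_mono_on ((hRint.sub hRfint).integrableOn) (hi.integrableOn)
        (hEmeas N) ?_
      intro x hx
      have h1 := maxSum_le (f := f) (h := h) N x
      have h2 : (0:ℝ) < maxSum f h N x := hx
      rcases max_cases (0:ℝ) (h x + maxSum f h N (f x)) with ⟨he, _⟩ | ⟨he, _⟩
      · rw [he] at h1; linarith
      · rw [he] at h1; linarith
    have step2 : ∫ x, (maxSum f h N x - maxSum f h N (f x)) ∂μ
        ≤ ∫ x in E N, (maxSum f h N x - maxSum f h N (f x)) ∂μ := by
      have hsplit := integral_add_compl (hEmeas N) (hRint.sub hRfint)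
      simp only [Pi.sub_apply] at hsplit
      have hcompl : ∫ x in (E N)ᶜ, (maxSum f h N x - maxSum f h N (f x)) ∂μ ≤ 0 := by
        refine setIntegral_nonpos (hEmeas N).compl ?_
        intro x hx
        have hx0 : maxSum f h N x = 0 :=
          le_antisymm (not_lt.1 hx) (maxSum_nonneg N x)
        rw [hx0]
        simpa using maxSum_nonneg N (f x)
      linarith
    have step3 : ∫ x, (maxSum f h N x - maxSum f h N (f x)) ∂μ = 0 := by
      rw [integral_sub hRint hRfint]
      have : ∫ x, maxSum f h N (f x) ∂μ = ∫ x, maxSum f h N x ∂μ := by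
        rw [← integral_map hfm.aemeasurable
          ((measurable_maxSum hfm hm N).aestronglyMeasurable), hf.map_eq]
      rw [this, sub_self]
    linarith
  -- pass to the limit
  rw [← hEunion]
  have hlim := tendsto_setIntegral_of_monotone hEmeas hEmono
    (hi.integrableOn : IntegrableOn h (⋃ N, E N) μ)
  exact ge_of_tendsto' hlim key


/-- The set where Birkhoff sums frequently exceed slope `β`. -/
def freqSet (f : X → X) (h : X → ℝ) (β : ℝ) : Set X :=
  {x | ∃ᶠ n in atTop, β * n < birkhoffSum f h n x}

lemma freqSet_mono {β β' : ℝ} (hb : β ≤ β') : freqSet f h β' ⊆ freqSet f h β := by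
  intro x hx
  refine hx.mono fun n hn => lt_of_le_of_lt ?_ hn
  exact mul_le_mul_of_nonneg_right hb (Nat.cast_nonneg n)

lemma measurableSet_freqSet (hfm : Measurable f) (hm : Measurable h) (β : ℝ) :
    MeasurableSet (freqSet f h β) := by
  have : freqSet f h β = ⋂ N : ℕ, ⋃ n : ℕ, ⋃ _ : N ≤ n,
      {x | β * n < birkhoffSum f h n x} := by
    ext x
    simp only [freqSet, mem_setOf_eq, frequently_atTop, mem_iInter, mem_iUnion, exists_prop,
      ge_iff_le]
  rw [this]
  exact MeasurableSet.iInter fun N => MeasurableSet.iUnion fun n => MeasurableSet.iUnion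
    fun _ => measurableSet_lt measurable_const (measurable_birkhoffSum hfm hm n)

lemma freqSet_subset_preimage {β β' : ℝ} (hb : β < β') :
    freqSet f h β' ⊆ f ⁻¹' (freqSet f h β) := by
  intro x hx
  rw [mem_preimage, freqSet, mem_setOf_eq, frequently_atTop]
  intro N
  -- choose N₀ such that for m ≥ N₀, β' * (m+1) - h x ≥ β * m
  obtain ⟨N₀, hN₀⟩ : ∃ N₀ : ℕ, ∀ m : ℕ, N₀ ≤ m → β * m ≤ β' * (m + 1) - h x := by
    obtain ⟨N₀, hN₀⟩ := exists_nat_ge ((h x - β') / (β' - β))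
    refine ⟨N₀, fun m hm => ?_⟩
    have h1 : (h x - β') / (β' - β) ≤ (m : ℝ) := le_trans hN₀ (Nat.cast_le.2 hm)
    have h2 : h x - β' ≤ (β' - β) * m := by
      rw [div_le_iff₀ (by linarith)] at h1; linarith
    push_cast; nlinarith
  rw [freqSet, mem_setOf_eq, frequently_atTop] at hx
  obtain ⟨n, hn1, hn2⟩ := hx (max (N + 1) (N₀ + 1))
  have hn1' : N + 1 ≤ n := le_trans (le_max_left _ _) hn1
  have hn0 : N₀ + 1 ≤ n := le_trans (le_max_right _ _) hn1
  obtain ⟨m, rfl⟩ : ∃ m, n = m + 1 := ⟨n - 1, by omega⟩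
  refine ⟨m, by omega, ?_⟩
  have hS : birkhoffSum f h (m + 1) x = h x + birkhoffSum f h m (f x) :=
    birkhoffSum_succ' f h m x
  have hb2 : β * m ≤ β' * (m + 1) - h x := hN₀ m (by omega)
  have : β' * ((m : ℝ) + 1) < h x + birkhoffSum f h m (f x) := by
    rw [← hS]; push_cast at hn2 ⊢; exact hn2
  linarith
lemma preimage_freqSet_subset {β β' : ℝ} (hb : β < β') :
    f ⁻¹' (freqSet f h β') ⊆ freqSet f h β := by
  intro x hx
  rw [mem_preimage, freqSet, mem_setOf_eq, frequently_atTop] at hx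
  rw [freqSet, mem_setOf_eq, frequently_atTop]
  intro N
  obtain ⟨N₀, hN₀⟩ : ∃ N₀ : ℕ, ∀ m : ℕ, N₀ ≤ m → β * (m + 1) ≤ β' * m + h x := by
    obtain ⟨N₀, hN₀⟩ := exists_nat_ge ((β - h x) / (β' - β))
    refine ⟨N₀, fun m hm => ?_⟩
    have h1 : (β - h x) / (β' - β) ≤ (m : ℝ) := le_trans hN₀ (Nat.cast_le.2 hm)
    have h2 : β - h x ≤ (β' - β) * m := by
      rw [div_le_iff₀ (by linarith)] at h1; linarith
    nlinarith
  obtain ⟨m, hm1, hm2⟩ := hx (max N N₀)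
  refine ⟨m + 1, by omega, ?_⟩
  have hS : birkhoffSum f h (m + 1) x = h x + birkhoffSum f h m (f x) :=
    birkhoffSum_succ' f h m x
  have hb2 : β * (m + 1) ≤ β' * m + h x := hN₀ m (le_trans (le_max_right _ _) hm1)
  push_cast
  rw [hS]; linarith

/-- Half of the Birkhoff ergodic theorem: a.e., eventually `S_n h ≤ c n` whenever `c > ∫ h`. -/
theorem halfBirkhoff [IsProbabilityMeasure μ] (hf : Ergodic f μ)
    (hm : Measurable h) (hi : Integrable h μ) {c : ℝ} (hc : ∫ x, h x ∂μ < c) :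
    ∀ᵐ x ∂μ, ∀ᶠ n in atTop, birkhoffSum f h n x ≤ c * n := by
  have hfm : Measurable f := hf.toMeasurePreserving.measurable
  set B : Set X := {x | ∀ β : ℝ, β < c → x ∈ freqSet f h β} with hB
  have hBeq : B = ⋂ k : ℕ, freqSet f h (c - 1 / (k + 1)) := by
    ext x
    simp only [hB, mem_setOf_eq, mem_iInter]
    constructor
    · intro H k
      refine H _ ?_
      have : (0:ℝ) < 1 / ((k:ℝ) + 1) := by positivity
      linarith
    · intro H β hβ
      obtain ⟨k, hk⟩ := exists_nat_one_div_lt (show (0:ℝ) < c - β by linarith)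
      exact freqSet_mono (by push_cast at hk ⊢; linarith) (H k)
  have hBmeas : MeasurableSet B := by
    rw [hBeq]
    exact MeasurableSet.iInter fun k => measurableSet_freqSet hfm hm _
  have hBinv : f ⁻¹' B = B := by
    apply Set.Subset.antisymm
    · intro x hx β hβ
      have hβ' : (β + c) / 2 < c := by linarith
      have h1 : f x ∈ freqSet f h ((β + c) / 2) := hx _ hβ'
      exact preimage_freqSet_subset (by linarith) h1
    · intro x hx
      show f x ∈ B
      intro β hβ
      have h1 : x ∈ freqSet f h ((β + c) / 2) := hx _ (by linarith)
      exact freqSet_subset_preimage (by linarith) h1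
  rcases hf.toPreErgodic.ae_empty_or_univ hBmeas hBinv with hB0 | hB1
  · -- B is null: a.e. x ∉ B, which gives the conclusion
    have hnB : ∀ᵐ x ∂μ, x ∉ B :=
      measure_eq_zero_iff_ae_notMem.1 (ae_eq_empty.1 hB0)
    refine hnB.mono fun x hx => ?_
    simp only [hB, mem_setOf_eq, not_forall] at hx
    obtain ⟨β, hβ, hxβ⟩ := hx
    rw [freqSet, mem_setOf_eq, not_frequently] at hxβ
    refine hxβ.mono fun n hn => ?_
    have h1 : birkhoffSum f h n x ≤ β * n := not_lt.1 hn
    exact le_trans h1 (mul_le_mul_of_nonneg_right (le_of_lt hβ) (Nat.cast_nonneg n))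
  · -- B is conull: contradiction with the maximal ergodic theorem
    exfalso
    set b : ℝ := (∫ x, h x ∂μ + c) / 2 with hbdef
    have hb1 : ∫ x, h x ∂μ < b := by rw [hbdef]; linarith
    have hb2 : b < c := by rw [hbdef]; linarith
    set h' : X → ℝ := fun x => h x - b with hh'
    have hm' : Measurable h' := hm.sub measurable_const
    have hi' : Integrable h' μ := hi.sub (integrable_const b)
    have hS' : ∀ n (x : X), birkhoffSum f h' n x = birkhoffSum f h n x - n * b := by
      intro n x
      simp only [hh', birkhoffSum, Finset.sum_sub_distrib, Finset.sum_const, Finset.card_range,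
        nsmul_eq_mul]
    set E : Set X := {x | ∃ n : ℕ, 0 < birkhoffSum f h' (n + 1) x} with hEdef
    have hBae : ∀ᵐ x ∂μ, x ∈ B := by
      have h2 : μ Bᶜ = 0 := ae_eq_univ.1 hB1
      have := measure_eq_zero_iff_ae_notMem.1 h2
      simpa using this
    have hEae : ∀ᵐ x ∂μ, x ∈ E := by
      refine hBae.mono fun x hx => ?_
      have hxb : x ∈ freqSet f h b := hx b hb2
      rw [freqSet, mem_setOf_eq, frequently_atTop] at hxb
      obtain ⟨n, hn1, hn2⟩ := hxb 1
      obtain ⟨m, rfl⟩ : ∃ m, n = m + 1 := ⟨n - 1, by omega⟩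
      refine ⟨m, ?_⟩
      rw [hS']
      linarith
    have hrest : μ.restrict E = μ := Measure.restrict_eq_self_of_ae_mem hEae
    have hmax := maximal_ergodic μ hf.toMeasurePreserving hm' hi'
    rw [← hEdef, hrest] at hmax
    have hint : ∫ x, h' x ∂μ = ∫ x, h x ∂μ - b := by
      rw [hh']
      rw [integral_sub hi (integrable_const b), integral_const]
      simp
    rw [hint] at hmax
    linarith


/-- No a.e. linear growth of a finite measurable function along orbits. -/
theorem not_linear_growth [IsProbabilityMeasure μ] (hf : MeasurePreserving f μ μ)
    {g : X → ℝ} (hg : Measurable g) {a : ℝ} (ha : 0 < a)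
    (H : ∀ᵐ x ∂μ, ∀ᶠ n in atTop, a * n ≤ g (f^[n] x)) : False := by
  have hfm := hf.measurable
  set C : ℕ → Set X := fun N => {x | ∀ n, N ≤ n → a * n ≤ g (f^[n] x)} with hC
  have hCmeas : ∀ N, MeasurableSet (C N) := by
    intro N
    have : C N = ⋂ n : ℕ, ⋂ _ : N ≤ n, {x | a * n ≤ g (f^[n] x)} := by
      ext x; simp [hC]
    rw [this]
    exact MeasurableSet.iInter fun n => MeasurableSet.iInter fun _ =>
      measurableSet_le measurable_const (hg.comp (hfm.iterate n))
  have hCmono : Monotone C := fun N M hNM x hx n hn => hx n (le_trans hNM hn)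
  have hCunion : ∀ᵐ x ∂μ, x ∈ ⋃ N, C N := by
    refine H.mono fun x hx => ?_
    rw [eventually_atTop] at hx
    obtain ⟨N, hN⟩ := hx
    exact mem_iUnion.2 ⟨N, fun n hn => hN n hn⟩
  have hCuniv : μ (⋃ N, C N) = 1 := by
    rw [← measure_univ (μ := μ)]
    refine measure_congr ?_
    rw [ae_eq_univ]
    exact measure_eq_zero_iff_ae_notMem.2 (by simpa using hCunion)
  have hlim := tendsto_measure_iUnion_atTop (μ := μ) hCmono
  rw [hCuniv] at hlim
  have hhalf : ∀ᶠ N in atTop, (1:ℝ≥0∞) / 2 < μ (C N) :=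
    hlim.eventually (lt_mem_nhds (by norm_num : (1:ℝ≥0∞)/2 < 1))
  obtain ⟨N, hN⟩ := hhalf.exists
  -- the sets {y | a * n ≤ g y}
  set D : ℕ → Set X := fun n => {y | a * n ≤ g y} with hD
  have hDmeas : ∀ n, MeasurableSet (D n) := fun n =>
    measurableSet_le measurable_const hg
  have hDanti : Antitone D := by
    intro n m hnm y hy
    exact le_trans (mul_le_mul_of_nonneg_left (Nat.cast_le.2 hnm) ha.le) hy
  have hDempty : (⋂ n, D n) = ∅ := by
    ext y
    simp only [mem_iInter, mem_empty_iff_false, iff_false, not_forall, hD, mem_setOf_eq, not_le]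
    obtain ⟨n, hn⟩ := exists_nat_gt (g y / a)
    exact ⟨n, by rw [div_lt_iff₀ ha] at hn; linarith [hn]⟩
  have hDlim := tendsto_measure_iInter_atTop (μ := μ)
    (fun n => (hDmeas n).nullMeasurableSet) hDanti ⟨0, measure_ne_top _ _⟩
  rw [hDempty] at hDlim
  simp only [measure_empty] at hDlim
  have hDsmall : ∀ᶠ n in atTop, μ (D n) < 1 / 2 :=
    hDlim.eventually (gt_mem_nhds (by norm_num : (0:ℝ≥0∞) < 1/2))
  obtain ⟨n, hn1, hn2⟩ := (hDsmall.and (eventually_ge_atTop N)).exists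
  -- but C N ⊆ f^[n] ⁻¹' D n
  have hsub : C N ⊆ f^[n] ⁻¹' (D n) := fun x hx => hx n hn2
  have hle : μ (C N) ≤ μ (D n) := by
    calc μ (C N) ≤ μ (f^[n] ⁻¹' (D n)) := measure_mono hsub
    _ = μ (D n) := (hf.iterate n).measure_preimage (hDmeas n).nullMeasurableSet
  exact absurd (lt_of_lt_of_le hN hle) (not_lt.2 hn1.le)

/-- Key lemma: if `g ≥ 0` is measurable and `g - g∘f ≤ χ` a.e. with `χ` integrable,
then `∫ χ ≥ 0`. -/
theorem key_nonneg [IsProbabilityMeasure μ] (hf : Ergodic f μ)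
    {g : X → ℝ} (hgm : Measurable g) (hg0 : ∀ x, 0 ≤ g x)
    {χ : X → ℝ} (hχm : Measurable χ) (hχi : Integrable χ μ)
    (hle : ∀ᵐ x ∂μ, g x - g (f x) ≤ χ x) : 0 ≤ ∫ x, χ x ∂μ := by
  by_contra hneg
  push_neg at hneg
  set c : ℝ := (∫ x, χ x ∂μ) / 2 with hc
  have hc0 : c < 0 := by rw [hc]; linarith
  have hcint : ∫ x, χ x ∂μ < c := by rw [hc]; linarith
  have hhb := halfBirkhoff μ hf hχm hχi hcint
  -- a.e. the bound holds along the whole orbit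
  have hae : ∀ᵐ x ∂μ, ∀ k : ℕ, g (f^[k] x) - g (f^[k + 1] x) ≤ χ (f^[k] x) := by
    rw [ae_all_iff]
    intro k
    have hq := (hf.toMeasurePreserving.iterate k).quasiMeasurePreserving
    have := hq.ae hle
    refine this.mono fun x hx => ?_
    rw [Function.iterate_succ_apply']
    exact hx
  refine not_linear_growth μ hf.toMeasurePreserving hgm (a := -c) (by linarith) ?_
  refine (hhb.and hae).mono fun x ⟨hx1, hx2⟩ => ?_
  have htel : ∀ n : ℕ, g x - g (f^[n] x) ≤ birkhoffSum f χ n x := by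
    intro n
    induction n with
    | zero => simp
    | succ n ih =>
        have := hx2 n
        rw [birkhoffSum_succ]
        have h3 : g x - g (f^[n + 1] x)
            = (g x - g (f^[n] x)) + (g (f^[n] x) - g (f^[n + 1] x)) := by ring
        rw [h3]
        exact add_le_add ih this
  refine hx1.mono fun n hn => ?_
  have h4 := htel n
  have h5 : g x - g (f^[n] x) ≤ c * n := le_trans h4 hn
  have := hg0 x
  linarith


lemma integrable_trunc_max [IsProbabilityMeasure μ] {φ ψ : X → ℝ}
    (hφm : Measurable φ) (hψi : Integrable ψ μ) (hψ0 : ∀ x, 0 ≤ ψ x)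
    (hup : ∀ᵐ x ∂μ, φ x ≤ ψ x) (M : ℕ) :
    Integrable (fun x => max (φ x) (-(M:ℝ))) μ := by
  refine Integrable.mono' (hψi.add (integrable_const (M:ℝ)))
    ((hφm.max measurable_const).aestronglyMeasurable) ?_
  refine hup.mono fun x hx => ?_
  have hM : (0:ℝ) ≤ M := Nat.cast_nonneg M
  have hψx := hψ0 x
  rw [Real.norm_eq_abs, abs_le]
  simp only [Pi.add_apply]
  constructor
  · exact le_trans (by linarith) (le_max_right _ _)
  · exact max_le (by linarith) (by linarith)

theorem integrable_of_trunc [IsProbabilityMeasure μ] {φ ψ : X → ℝ}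
    (hφm : Measurable φ) (hψi : Integrable ψ μ) (hψ0 : ∀ x, 0 ≤ ψ x)
    (hup : ∀ᵐ x ∂μ, φ x ≤ ψ x)
    (htr : ∀ M : ℕ, 0 ≤ ∫ x, max (φ x) (-(M:ℝ)) ∂μ) : Integrable φ μ := by
  set φp : X → ℝ := fun x => max (φ x) 0 with hφp
  set φn : X → ℝ := fun x => max (-φ x) 0 with hφn
  have hφpm : Measurable φp := hφm.max measurable_const
  have hφnm : Measurable φn := hφm.neg.max measurable_const
  have hφpi : Integrable φp μ := by
    refine Integrable.mono' hψi hφpm.aestronglyMeasurable ?_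
    refine hup.mono fun x hx => ?_
    rw [Real.norm_eq_abs, abs_of_nonneg (le_max_right _ _)]
    exact max_le hx (hψ0 x)
  have hMint : ∀ M : ℕ, Integrable (fun x => min (φn x) (M:ℝ)) μ := by
    intro M
    refine Integrable.mono' (integrable_const (M:ℝ))
      (hφnm.min measurable_const).aestronglyMeasurable ?_
    refine Eventually.of_forall fun x => ?_
    rw [Real.norm_eq_abs, abs_of_nonneg (le_min (le_max_right _ _) (Nat.cast_nonneg M))]
    exact min_le_right _ _
  have hmaxint := integrable_trunc_max μ hφm hψi hψ0 hup
  have hid : ∀ (M : ℕ) (x : X), min (φn x) (M:ℝ) = φp x - max (φ x) (-(M:ℝ)) := by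
    intro M x
    have hM : (0:ℝ) ≤ M := Nat.cast_nonneg M
    simp only [hφp, hφn, max_def, min_def]
    split_ifs <;> linarith
  have hbound : ∀ M : ℕ, ∫ x, min (φn x) (M:ℝ) ∂μ ≤ ∫ x, φp x ∂μ := by
    intro M
    have heq : ∫ x, min (φn x) (M:ℝ) ∂μ
        = ∫ x, φp x ∂μ - ∫ x, max (φ x) (-(M:ℝ)) ∂μ := by
      rw [← integral_sub hφpi (hmaxint M)]
      exact integral_congr_ae (Eventually.of_forall fun x => hid M x)
    rw [heq]
    linarith [htr M]
  have hlin : ∫⁻ x, ENNReal.ofReal (φn x) ∂μ ≤ ENNReal.ofReal (∫ x, φp x ∂μ) := by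
    have hsup : ∀ x, ENNReal.ofReal (φn x) = ⨆ M : ℕ, ENNReal.ofReal (min (φn x) (M:ℝ)) := by
      intro x
      refine le_antisymm ?_ (iSup_le fun M => ENNReal.ofReal_le_ofReal (min_le_left _ _))
      obtain ⟨M, hM⟩ := exists_nat_ge (φn x)
      refine le_trans (le_of_eq ?_) (le_iSup _ M)
      rw [min_eq_left hM]
    calc ∫⁻ x, ENNReal.ofReal (φn x) ∂μ
        = ∫⁻ x, ⨆ M : ℕ, ENNReal.ofReal (min (φn x) (M:ℝ)) ∂μ :=
          lintegral_congr fun x => hsup x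
      _ = ⨆ M : ℕ, ∫⁻ x, ENNReal.ofReal (min (φn x) (M:ℝ)) ∂μ := by
          refine lintegral_iSup (fun M => (hφnm.min measurable_const).ennreal_ofReal)
            (fun M N hMN x => ENNReal.ofReal_le_ofReal
              (le_min (min_le_left _ _) (le_trans (min_le_right _ _) (Nat.cast_le.2 hMN))))
      _ ≤ ENNReal.ofReal (∫ x, φp x ∂μ) := by
          refine iSup_le fun M => ?_
          rw [← ofReal_integral_eq_lintegral_ofReal (hMint M)
            (Eventually.of_forall fun x => le_min (le_max_right _ _) (Nat.cast_nonneg M))]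
          exact ENNReal.ofReal_le_ofReal (hbound M)
  have hφni : Integrable φn μ := by
    refine ⟨hφnm.aestronglyMeasurable, ?_⟩
    have hnn : 0 ≤ᵐ[μ] φn := Eventually.of_forall fun x => le_max_right (-φ x) 0
    exact (hasFiniteIntegral_iff_ofReal hnn).2 (lt_of_le_of_lt hlin ENNReal.ofReal_lt_top)
  have hrepr : φ = fun x => φp x - φn x := by
    funext x
    simp only [hφp, hφn]
    rcases le_total 0 (φ x) with hx | hx
    · rw [max_eq_left hx, max_eq_right (neg_nonpos.2 hx)]; ring
    · rw [max_eq_right hx, max_eq_left (neg_nonneg.2 hx)]; ring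
  rw [hrepr]
  exact hφpi.sub hφni


lemma tendsto_div_aux {u : ℕ → ℝ} {gx : ℝ} (h0 : ∀ n, 0 ≤ u n)
    (hk : ∀ k : ℕ, ∀ᶠ n in atTop, u n ≤ gx + (1 / ((k:ℝ) + 1)) * n) :
    Tendsto (fun n : ℕ => u n / n) atTop (nhds 0) := by
  rw [Metric.tendsto_atTop]
  intro ε hε
  obtain ⟨k, hk1⟩ := exists_nat_one_div_lt (show (0:ℝ) < ε/2 by linarith)
  obtain ⟨N1, hN1⟩ := eventually_atTop.1 (hk k)
  obtain ⟨N2, hN2⟩ := exists_nat_gt (2 * gx / ε)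
  refine ⟨max N1 (max N2 1), fun n hn => ?_⟩
  have hn1 : N1 ≤ n := le_trans (le_max_left _ _) hn
  have hn2 : N2 ≤ n := le_trans (le_trans (le_max_left _ _) (le_max_right _ _)) hn
  have hn3 : 1 ≤ n := le_trans (le_trans (le_max_right _ _) (le_max_right _ _)) hn
  have hnpos : (0:ℝ) < n := by exact_mod_cast hn3
  have hun := hN1 n hn1
  have hgxn : gx / n < ε / 2 := by
    rw [div_lt_iff₀ hnpos]
    have h2 : 2 * gx / ε < (n:ℝ) := lt_of_lt_of_le hN2 (Nat.cast_le.2 hn2)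
    rw [div_lt_iff₀ hε] at h2
    nlinarith
  have hdiv : u n / n ≤ gx / n + 1 / ((k:ℝ) + 1) := by
    have h1 : u n / n ≤ (gx + (1 / ((k:ℝ) + 1)) * n) / n := (div_le_div_iff_of_pos_right hnpos).2 hun
    rwa [add_div, mul_div_assoc, div_self (ne_of_gt hnpos), mul_one] at h1
  rw [Real.dist_eq, sub_zero, abs_of_nonneg (div_nonneg (h0 n) hnpos.le)]
  calc u n / n ≤ gx / n + 1 / ((k:ℝ) + 1) := hdiv
    _ < ε / 2 + ε / 2 := by exact add_lt_add hgxn hk1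
    _ = ε := by ring


theorem tempered_of_log_sub_le' {X : Type*} [MeasurableSpace X]
    (μ : Measure X) [IsProbabilityMeasure μ]
    (f finv : X → X) (hf : Ergodic f μ) (hfinv : Measurable finv)
    (hleft : Function.LeftInverse finv f) (hright : Function.RightInverse finv f)
    (D : X → ℝ) (hDmeas : Measurable D) (hD1 : ∀ x, 1 ≤ D x)
    (ψ : X → ℝ) (hψint : Integrable ψ μ) (hψ0 : ∀ x, 0 ≤ ψ x)
    (hbound : ∀ᵐ x ∂μ, Real.log (D x) - Real.log (D (f x)) ≤ ψ x) :
    ∀ᵐ x ∂μ,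
      Tendsto (fun n : ℕ => Real.log (D (f^[n] x)) / n) atTop (nhds 0) ∧
      Tendsto (fun n : ℕ => Real.log (D (finv^[n] x)) / n) atTop (nhds 0) := by
  have hfm : Measurable f := hf.toMeasurePreserving.measurable
  have hfinv_mp : MeasurePreserving finv μ μ := by
    refine ⟨hfinv, ?_⟩
    have h1 : Measure.map finv (Measure.map f μ) = Measure.map (finv ∘ f) μ :=
      Measure.map_map hfinv hfm
    rw [hf.toMeasurePreserving.map_eq, hleft.comp_eq_id, Measure.map_id] at h1
    exact h1
  have hfinv_erg : Ergodic finv μ := by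
    refine ⟨hfinv_mp, ⟨fun s hs hsinv => ?_⟩⟩
    refine hf.toPreErgodic.aeconst_set hs ?_
    calc f ⁻¹' s = f ⁻¹' (finv ⁻¹' s) := by rw [hsinv]
      _ = (finv ∘ f) ⁻¹' s := rfl
      _ = s := by rw [hleft.comp_eq_id, Set.preimage_id]
  set g : X → ℝ := fun x => Real.log (D x) with hg
  have hgm : Measurable g := Real.measurable_log.comp hDmeas
  have hg0 : ∀ x, 0 ≤ g x := fun x => Real.log_nonneg (hD1 x)
  set φ : X → ℝ := fun x => g x - g (f x) with hφ
  set φ' : X → ℝ := fun x => g x - g (finv x) with hφ'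
  have hφm : Measurable φ := hgm.sub (hgm.comp hfm)
  have hφ'm : Measurable φ' := hgm.sub (hgm.comp hfinv)
  have hup : ∀ᵐ x ∂μ, φ x ≤ ψ x := hbound
  have htr : ∀ M : ℕ, 0 ≤ ∫ x, max (φ x) (-(M:ℝ)) ∂μ := by
    intro M
    exact key_nonneg μ hf hgm hg0 (hφm.max measurable_const)
      (integrable_trunc_max μ hφm hψint hψ0 hup M)
      (Eventually.of_forall fun x => le_max_left _ _)
  have hφi : Integrable φ μ := integrable_of_trunc μ hφm hψint hψ0 hup htr
  have hφpos : 0 ≤ ∫ x, φ x ∂μ :=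
    key_nonneg μ hf hgm hg0 hφm hφi (Eventually.of_forall fun x => le_rfl)
  have hφ'eq : ∀ x, φ' x = -φ (finv x) := by
    intro x
    simp only [hφ, hφ', hright x]
    ring
  have hφ'i : Integrable φ' μ := by
    have h1 : Integrable (φ ∘ finv) μ :=
      (hfinv_mp.integrable_comp hφi.aestronglyMeasurable).2 hφi
    exact h1.neg.congr (Eventually.of_forall fun x => (hφ'eq x).symm)
  have hφ'pos : 0 ≤ ∫ x, φ' x ∂μ :=
    key_nonneg μ hfinv_erg hgm hg0 hφ'm hφ'i (Eventually.of_forall fun x => le_rfl)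
  -- telescoping identities
  have htelf : ∀ (T : X → X) (u : X → ℝ) (x : X) (n : ℕ),
      birkhoffSum T (fun y => u y - u (T y)) n x = u x - u (T^[n] x) := by
    intro T u x n
    induction n with
    | zero => simp
    | succ n ih =>
        rw [birkhoffSum_succ, ih, Function.iterate_succ_apply']
        ring
  have hneg : ∀ (T : X → X) (u : X → ℝ) (n : ℕ) (x : X),
      birkhoffSum T (fun y => -u y) n x = -birkhoffSum T u n x := by
    intro T u n x
    simp [birkhoffSum]
  have hmainf : ∀ k : ℕ, ∀ᵐ x ∂μ, ∀ᶠ n in atTop,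
      -birkhoffSum f φ n x ≤ (1 / ((k:ℝ) + 1)) * n := by
    intro k
    have hc : ∫ x, -φ x ∂μ < 1 / ((k:ℝ) + 1) := by
      rw [integral_neg]
      have : (0:ℝ) < 1 / ((k:ℝ) + 1) := by positivity
      linarith
    have := halfBirkhoff μ hf hφm.neg hφi.neg hc
    refine this.mono fun x hx => ?_
    refine hx.mono fun n hn => ?_
    rw [← hneg f φ n x]
    exact hn
  have hmainb : ∀ k : ℕ, ∀ᵐ x ∂μ, ∀ᶠ n in atTop,
      -birkhoffSum finv φ' n x ≤ (1 / ((k:ℝ) + 1)) * n := by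
    intro k
    have hc : ∫ x, -φ' x ∂μ < 1 / ((k:ℝ) + 1) := by
      rw [integral_neg]
      have : (0:ℝ) < 1 / ((k:ℝ) + 1) := by positivity
      linarith
    have := halfBirkhoff μ hfinv_erg hφ'm.neg hφ'i.neg hc
    refine this.mono fun x hx => ?_
    refine hx.mono fun n hn => ?_
    rw [← hneg finv φ' n x]
    exact hn
  have hallf : ∀ᵐ x ∂μ, ∀ k : ℕ, ∀ᶠ n in atTop,
      -birkhoffSum f φ n x ≤ (1 / ((k:ℝ) + 1)) * n := ae_all_iff.2 hmainf
  have hallb : ∀ᵐ x ∂μ, ∀ k : ℕ, ∀ᶠ n in atTop,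
      -birkhoffSum finv φ' n x ≤ (1 / ((k:ℝ) + 1)) * n := ae_all_iff.2 hmainb
  refine (hallf.and hallb).mono fun x hx => ?_
  obtain ⟨hx1, hx2⟩ := hx
  constructor
  · refine tendsto_div_aux (u := fun n => Real.log (D (f^[n] x))) (gx := g x)
      (fun n => Real.log_nonneg (hD1 _)) fun k => ?_
    refine (hx1 k).mono fun n hn => ?_
    have hT : birkhoffSum f φ n x = g x - g (f^[n] x) := htelf f g x n
    show g (f^[n] x) ≤ g x + 1 / ((k:ℝ) + 1) * n
    linarith
  · refine tendsto_div_aux (u := fun n => Real.log (D (finv^[n] x))) (gx := g x)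
      (fun n => Real.log_nonneg (hD1 _)) fun k => ?_
    refine (hx2 k).mono fun n hn => ?_
    have hT : birkhoffSum finv φ' n x = g x - g (finv^[n] x) := htelf finv g x n
    show g (finv^[n] x) ≤ g x + 1 / ((k:ℝ) + 1) * n
    linarith


end TemperedAux

open Filter MeasureTheory

/-- Temperedness lemma: let `(X, ℬ, μ)` be a probability space, `f` an invertible
ergodic measure-preserving transformation (with inverse `finv`), `D : X → [1, ∞)`
measurable, and `ψ : X → [0, ∞)` integrable with
`log D(x) − log D(f(x)) ≤ ψ(x)` for μ-a.e. `x`.  Then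
`(1/n)·log D(fⁿ(x)) → 0` and `(1/n)·log D(f⁻ⁿ(x)) → 0` for μ-a.e. `x`. -/
theorem tempered_of_log_sub_le {X : Type*} [MeasurableSpace X]
    (μ : Measure X) [IsProbabilityMeasure μ]
    (f finv : X → X) (hf : Ergodic f μ) (hfinv : Measurable finv)
    (hleft : Function.LeftInverse finv f) (hright : Function.RightInverse finv f)
    (D : X → ℝ) (hDmeas : Measurable D) (hD1 : ∀ x, 1 ≤ D x)
    (ψ : X → ℝ) (hψint : Integrable ψ μ) (hψ0 : ∀ x, 0 ≤ ψ x)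
    (hbound : ∀ᵐ x ∂μ, Real.log (D x) - Real.log (D (f x)) ≤ ψ x) :
    ∀ᵐ x ∂μ,
      Tendsto (fun n : ℕ => Real.log (D (f^[n] x)) / n) atTop (nhds 0) ∧
      Tendsto (fun n : ℕ => Real.log (D (finv^[n] x)) / n) atTop (nhds 0) :=
  TemperedAux.tempered_of_log_sub_le' μ f finv hf hfinv hleft hright D hDmeas hD1
    ψ hψint hψ0 hbound

end
end

section
/- Let X be a metric space with metric ρ, Λ ⊆ X, and let E(x), F(x), x ∈ Λ, be two families of subspaces of ℝ^d such that: (1) E(x) and F(x) are orthogonal for each x ∈ Λ; (2) the family E(x), x ∈ Λ, is Hölder continuous on Λ; (3) the family E(x) ⊕ F(x), x ∈ Λ, is Hölder continuous on Λ. Then the family F(x), x ∈ Λ, is also Hölder continuous on Λ. -/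
open Metric

noncomputable section

/-- The distance `d(V, W)` between two subspaces of `ℝ^d`. -/
def subDist {d : ℕ} (V W : Submodule ℝ (EuclideanSpace ℝ (Fin d))) : ℝ :=
  max (⨆ w : {w : EuclideanSpace ℝ (Fin d) // w ∈ W ∧ ‖w‖ = 1},
        infDist (w : EuclideanSpace ℝ (Fin d)) (V : Set (EuclideanSpace ℝ (Fin d))))
      (⨆ v : {v : EuclideanSpace ℝ (Fin d) // v ∈ V ∧ ‖v‖ = 1},
        infDist (v : EuclideanSpace ℝ (Fin d)) (W : Set (EuclideanSpace ℝ (Fin d))))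

/-- Hölder continuity of a family of subspaces of `ℝ^d` on a set `Λ`. -/
def HolderFamily {X : Type*} [MetricSpace X] {d : ℕ} (Λ : Set X)
    (E : X → Submodule ℝ (EuclideanSpace ℝ (Fin d))) : Prop :=
  ∃ L ε₀ β : ℝ, 0 < L ∧ 0 < ε₀ ∧ 0 < β ∧ β ≤ 1 ∧
    ∀ x ∈ Λ, ∀ y ∈ Λ, dist x y ≤ ε₀ → subDist (E x) (E y) ≤ L * dist x y ^ β

namespace HolderAux

variable {d : ℕ}

local notation "Eu" => EuclideanSpace ℝ (Fin d)

/-- distance to a subspace via orthogonal projection -/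
lemma infDist_eq_norm_sub_proj (K : Submodule ℝ Eu) (v : Eu) :
    infDist v (K : Set Eu) = ‖v - (Submodule.orthogonalProjectionOnto K v : Eu)‖ := by
  rw [infDist_eq_iInf, Submodule.coe_orthogonalProjectionOnto_apply, Submodule.starProjection_minimal]
  simp only [dist_eq_norm]
  rfl

lemma norm_proj_le (K : Submodule ℝ Eu) (v : Eu) :
    ‖(Submodule.orthogonalProjectionOnto K v : Eu)‖ ≤ ‖v‖ := by
  calc ‖(Submodule.orthogonalProjectionOnto K v : Eu)‖ ≤ ‖Submodule.orthogonalProjectionOnto K‖ * ‖v‖ :=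
        (Submodule.orthogonalProjectionOnto K).le_opNorm v
    _ ≤ 1 * ‖v‖ := by
        exact mul_le_mul_of_nonneg_right (Submodule.orthogonalProjectionOnto_norm_le K) (norm_nonneg v)
    _ = ‖v‖ := one_mul _

lemma bddAbove_infDist (V W : Submodule ℝ Eu) :
    BddAbove (Set.range fun w : {w : Eu // w ∈ W ∧ ‖w‖ = 1} =>
      infDist (w : Eu) (V : Set Eu)) := by
  refine ⟨1, ?_⟩
  rintro _ ⟨w, rfl⟩
  calc infDist (w : Eu) (V : Set Eu) ≤ dist (w : Eu) 0 :=
        infDist_le_dist_of_mem (Submodule.zero_mem V)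
    _ = ‖(w : Eu)‖ := by rw [dist_zero_right]
    _ = 1 := w.2.2

lemma infDist_le_subDist_left {V W : Submodule ℝ Eu} {w : Eu} (hw : w ∈ W) (h1 : ‖w‖ = 1) :
    infDist w (V : Set Eu) ≤ subDist V W := by
  refine le_trans ?_ (le_max_left _ _)
  exact le_ciSup (bddAbove_infDist V W) (⟨w, hw, h1⟩ : {w : Eu // w ∈ W ∧ ‖w‖ = 1})

lemma infDist_le_subDist_right {V W : Submodule ℝ Eu} {v : Eu} (hv : v ∈ V) (h1 : ‖v‖ = 1) :
    infDist v (W : Set Eu) ≤ subDist V W := by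
  refine le_trans ?_ (le_max_right _ _)
  exact le_ciSup (bddAbove_infDist W V) (⟨v, hv, h1⟩ : {v : Eu // v ∈ V ∧ ‖v‖ = 1})

/-- Bound on the norm of the projection of `v` onto `E`, when `v` is a unit vector
orthogonal to `E'` and every unit vector of `E` is within `a` of `E'`. -/
lemma norm_proj_E_le {E E' : Submodule ℝ Eu} {v : Eu} (hv1 : ‖v‖ = 1)
    (hvE' : ∀ u ∈ E', (inner ℝ u v : ℝ) = 0) {a : ℝ} (ha : 0 ≤ a)
    (hA : ∀ u : Eu, u ∈ E → ‖u‖ = 1 → infDist u (E' : Set Eu) ≤ a) :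
    ‖(Submodule.orthogonalProjectionOnto E v : Eu)‖ ≤ a := by
  set e : Eu := (Submodule.orthogonalProjectionOnto E v : Eu) with he
  rcases eq_or_ne e 0 with h0 | h0
  · rw [h0, norm_zero]; exact ha
  have hne : ‖e‖ ≠ 0 := norm_ne_zero_iff.mpr h0
  have hpos : (0:ℝ) < ‖e‖ := norm_pos_iff.mpr h0
  set u : Eu := ‖e‖⁻¹ • e with hu
  have huE : u ∈ E := Submodule.smul_mem E _ (Submodule.orthogonalProjectionOnto E v).2
  have hu1 : ‖u‖ = 1 := by
    rw [hu, norm_smul, norm_inv, norm_norm, inv_mul_cancel₀ hne]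
  -- inner ℝ e v = ‖e‖^2
  have hev : (inner ℝ e v : ℝ) = ‖e‖ ^ 2 := by
    have h1 : (inner ℝ e (v - e) : ℝ) = 0 := by
      have h2 := Submodule.sub_starProjection_mem_orthogonal (K := E) v e
        (Submodule.orthogonalProjectionOnto E v).2
      rw [← Submodule.coe_orthogonalProjectionOnto_apply, ← he] at h2
      exact h2
    have h5 : (inner ℝ e v : ℝ) = inner ℝ e e + inner ℝ e (v - e) := by
      rw [← inner_add_right]
      congr 1
      abel
    rw [h5, h1, add_zero, real_inner_self_eq_norm_sq]
  -- inner ℝ u v ≤ a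
  have huv : (inner ℝ u v : ℝ) ≤ a := by
    set u' : Eu := (Submodule.orthogonalProjectionOnto E' u : Eu) with hu'
    have h1 : ‖u - u'‖ ≤ a := by
      rw [← infDist_eq_norm_sub_proj]
      exact hA u huE hu1
    have h2 : (inner ℝ u' v : ℝ) = 0 := hvE' u' (Submodule.orthogonalProjectionOnto E' u).2
    calc (inner ℝ u v : ℝ) = inner ℝ (u - u') v + inner ℝ u' v := by
          rw [← inner_add_left]
          congr 1
          abel
      _ = (inner ℝ (u - u') v : ℝ) := by rw [h2, add_zero]
      _ ≤ ‖u - u'‖ * ‖v‖ := real_inner_le_norm _ _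
      _ = ‖u - u'‖ := by rw [hv1, mul_one]
      _ ≤ a := h1
  have h3 : (inner ℝ u v : ℝ) = ‖e‖⁻¹ * inner ℝ e v := by
    rw [hu, inner_smul_left]; simp
  rw [h3, hev] at huv
  have h4 : ‖e‖⁻¹ * ‖e‖ ^ 2 = ‖e‖ := by
    rw [sq]
    field_simp
  rw [h4] at huv
  exact huv

/-- Key one-sided estimate. -/
lemma key_estimate (E F E' F' : Submodule ℝ Eu)
    (hEF : ∀ u ∈ E, ∀ v ∈ F, (inner ℝ u v : ℝ) = 0)
    (hE'F' : ∀ u ∈ E', ∀ v ∈ F', (inner ℝ u v : ℝ) = 0)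
    {a b : ℝ} (ha : 0 ≤ a)
    (hA : ∀ u : Eu, u ∈ E → ‖u‖ = 1 → infDist u (E' : Set Eu) ≤ a)
    (hB : ∀ w : Eu, w ∈ (E' ⊔ F') → ‖w‖ = 1 → infDist w (((E ⊔ F) : Submodule ℝ Eu) : Set Eu) ≤ b)
    {v : Eu} (hv : v ∈ F') (hv1 : ‖v‖ = 1) :
    infDist v (F : Set Eu) ≤ a + 2 * b := by
  set G : Submodule ℝ Eu := E ⊔ F with hG
  set w : Eu := (Submodule.orthogonalProjectionOnto G v : Eu) with hw
  have hvw : ‖v - w‖ ≤ b := by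
    rw [← infDist_eq_norm_sub_proj]
    exact hB v (Submodule.mem_sup_right hv) hv1
  -- decompose w ∈ G = E ⊔ F
  obtain ⟨p, hp, q, hq, hpq⟩ := Submodule.mem_sup.mp (Submodule.orthogonalProjectionOnto G v).2
  -- the E-projection of w is p
  have hqE : q ∈ Eᗮ := by
    rw [Submodule.mem_orthogonal]
    intro u hu
    exact hEF u hu q hq
  have hwE : (Submodule.orthogonalProjectionOnto E w : Eu) = p := by
    apply Submodule.eq_starProjection_of_mem_orthogonal' hp hqE
    exact hpq.symm
  -- estimate ‖p‖
  have hpv : ∀ u ∈ E', (inner ℝ u v : ℝ) = 0 := fun u hu => hE'F' u hu v hv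
  have hPv : ‖(Submodule.orthogonalProjectionOnto E v : Eu)‖ ≤ a := norm_proj_E_le hv1 hpv ha hA
  have hp_norm : ‖p‖ ≤ a + b := by
    have hlin : (Submodule.orthogonalProjectionOnto E w : Eu)
        = (Submodule.orthogonalProjectionOnto E v : Eu) + (Submodule.orthogonalProjectionOnto E (w - v) : Eu) := by
      rw [← Submodule.coe_add, ← map_add]
      congr 2
      abel
    calc ‖p‖ = ‖(Submodule.orthogonalProjectionOnto E w : Eu)‖ := by rw [hwE]
      _ = ‖(Submodule.orthogonalProjectionOnto E v : Eu) + (Submodule.orthogonalProjectionOnto E (w - v) : Eu)‖ := by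
          rw [hlin]
      _ ≤ ‖(Submodule.orthogonalProjectionOnto E v : Eu)‖ + ‖(Submodule.orthogonalProjectionOnto E (w - v) : Eu)‖ :=
          norm_add_le _ _
      _ ≤ a + ‖w - v‖ := add_le_add hPv (norm_proj_le E (w - v))
      _ = a + ‖v - w‖ := by rw [norm_sub_rev]
      _ ≤ a + b := by linarith
  -- conclude
  have hpq' : p + q = w := hpq
  calc infDist v (F : Set Eu) ≤ dist v q := infDist_le_dist_of_mem hq
    _ = ‖v - q‖ := dist_eq_norm _ _
    _ = ‖(v - w) + p‖ := by
        congr 1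
        rw [← hpq']
        abel
    _ ≤ ‖v - w‖ + ‖p‖ := norm_add_le _ _
    _ ≤ b + (a + b) := add_le_add hvw hp_norm
    _ = a + 2 * b := by ring

lemma subDist_self_nonpos (V : Submodule ℝ Eu) : subDist V V ≤ 0 := by
  apply max_le <;>
  · apply Real.iSup_le _ le_rfl
    rintro ⟨w, hw, -⟩
    exact le_of_eq (infDist_zero_of_mem hw)

end HolderAux

/-- If `E(x)` and `F(x)` are orthogonal for each `x ∈ Λ`, the family `E(x)` is Hölder
continuous on `Λ`, and the family `E(x) ⊕ F(x)` is Hölder continuous on `Λ`, then the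
family `F(x)` is also Hölder continuous on `Λ`. -/
theorem holderFamily_of_orthogonal_of_holder_sup {X : Type*} [MetricSpace X] {d : ℕ}
    (Λ : Set X) (E F : X → Submodule ℝ (EuclideanSpace ℝ (Fin d)))
    (horth : ∀ x ∈ Λ, ∀ u ∈ E x, ∀ v ∈ F x, (inner ℝ u v : ℝ) = 0)
    (hE : HolderFamily Λ E)
    (hEF : HolderFamily Λ (fun x => E x ⊔ F x)) :
    HolderFamily Λ F := by
  obtain ⟨L₁, ε₁, β₁, hL₁, hε₁, hβ₁, hβ₁', hbd₁⟩ := hE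
  obtain ⟨L₂, ε₂, β₂, hL₂, hε₂, hβ₂, hβ₂', hbd₂⟩ := hEF
  refine ⟨L₁ + 2 * L₂, min 1 (min ε₁ ε₂), min β₁ β₂,
    by linarith, by positivity, lt_min hβ₁ hβ₂, min_le_of_left_le hβ₁', ?_⟩
  intro x hx y hy hxy
  set r : ℝ := dist x y with hr
  set β : ℝ := min β₁ β₂ with hβ
  have hr0 : 0 ≤ r := dist_nonneg
  have hr1 : r ≤ 1 := le_trans hxy (min_le_left _ _)
  have hrε₁ : r ≤ ε₁ := le_trans hxy (le_trans (min_le_right _ _) (min_le_left _ _))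
  have hrε₂ : r ≤ ε₂ := le_trans hxy (le_trans (min_le_right _ _) (min_le_right _ _))
  rcases eq_or_lt_of_le hr0 with h0 | hrpos
  · -- dist x y = 0, so x = y
    have hxy0 : x = y := dist_eq_zero.mp h0.symm
    subst hxy0
    have h1 : (0:ℝ) ≤ (L₁ + 2 * L₂) * r ^ β := by
      apply mul_nonneg (by linarith)
      exact Real.rpow_nonneg hr0 β
    exact le_trans (HolderAux.subDist_self_nonpos (F x)) h1
  · have hrβ₁ : r ^ β₁ ≤ r ^ β :=
      Real.rpow_le_rpow_of_exponent_ge hrpos hr1 (min_le_left _ _)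
    have hrβ₂ : r ^ β₂ ≤ r ^ β :=
      Real.rpow_le_rpow_of_exponent_ge hrpos hr1 (min_le_right _ _)
    have hrβ0 : 0 ≤ r ^ β := Real.rpow_nonneg hr0 β
    have hEbd : subDist (E x) (E y) ≤ L₁ * r ^ β := by
      calc subDist (E x) (E y) ≤ L₁ * r ^ β₁ := hbd₁ x hx y hy hrε₁
        _ ≤ L₁ * r ^ β := mul_le_mul_of_nonneg_left hrβ₁ hL₁.le
    have hGbd : subDist (E x ⊔ F x) (E y ⊔ F y) ≤ L₂ * r ^ β := by
      calc subDist (E x ⊔ F x) (E y ⊔ F y) ≤ L₂ * r ^ β₂ := hbd₂ x hx y hy hrε₂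
        _ ≤ L₂ * r ^ β := mul_le_mul_of_nonneg_left hrβ₂ hL₂.le
    have ha : (0:ℝ) ≤ L₁ * r ^ β := mul_nonneg hL₁.le hrβ0
    have htot : (0:ℝ) ≤ (L₁ + 2 * L₂) * r ^ β := mul_nonneg (by linarith) hrβ0
    have habmul : L₁ * r ^ β + 2 * (L₂ * r ^ β) = (L₁ + 2 * L₂) * r ^ β := by ring
    apply max_le
    · -- unit vectors of F y, distance to F x
      apply Real.iSup_le _ htot
      rintro ⟨v, hv, hv1⟩
      rw [← habmul]
      apply HolderAux.key_estimate (E x) (F x) (E y) (F y)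
        (horth x hx) (horth y hy) ha _ _ hv hv1
      · intro u hu h1
        exact le_trans (HolderAux.infDist_le_subDist_right hu h1) hEbd
      · intro w hw h1
        exact le_trans (HolderAux.infDist_le_subDist_left hw h1) hGbd
    · -- unit vectors of F x, distance to F y
      apply Real.iSup_le _ htot
      rintro ⟨v, hv, hv1⟩
      rw [← habmul]
      apply HolderAux.key_estimate (E y) (F y) (E x) (F x)
        (horth y hy) (horth x hx) ha _ _ hv hv1
      · intro u hu h1
        exact le_trans (HolderAux.infDist_le_subDist_left hu h1) hEbd
      · intro w hw h1
        exact le_trans (HolderAux.infDist_le_subDist_right hw h1) hGbd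
end
end

section
/- Let (A_n)_{n≥1} and (B_n)_{n≥1} be two sequences of real d×d matrices (d > 0) such that for some constants 0 < λ < μ and C ≥ 1 there exist subspaces E, E', F, F' of ℝ^d with ℝ^d = E ⊕ E' = F ⊕ F' satisfying: (1) ‖A_n u‖ ≤ C·λ^n‖u‖ for u ∈ E and C^{−1}·μ^n‖v‖ ≤ ‖A_n v‖ for v ∈ E'; (2) ‖B_n u‖ ≤ C·λ^n‖u‖ for u ∈ F and C^{−1}·μ^n‖v‖ ≤ ‖B_n v‖ for v ∈ F'; (3) max{‖v‖, ‖w‖} ≤ d·‖v + w‖ whenever v ∈ E, w ∈ E' or v ∈ F, w ∈ F'. Then for each pair (δ, a) ∈ (0,1] × [λ, ∞) satisfying (λ/a)^{n+1} < δ ≤ (λ/a)^n and ‖A_n − B_n‖ ≤ δ·a^n, one has d(E, F) ≤ (2 + d)·C²·(μ/λ)·δ^{log(μ/λ)/log(a/λ)}. -/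
open Metric

noncomputable section

private lemma brin_aux {d : ℕ} (hd : 0 < d)
    (A B : EuclideanSpace ℝ (Fin d) →L[ℝ] EuclideanSpace ℝ (Fin d))
    (lam mu C : ℝ) (hlam : 0 < lam) (hmu : 0 < mu) (hC : 1 ≤ C)
    (E F F' : Submodule ℝ (EuclideanSpace ℝ (Fin d)))
    (hFF' : IsCompl F F') (n : ℕ)
    (hA₁ : ∀ u ∈ E, ‖A u‖ ≤ C * lam ^ n * ‖u‖)
    (hB₁ : ∀ u ∈ F, ‖B u‖ ≤ C * lam ^ n * ‖u‖)
    (hB₂ : ∀ v ∈ F', C⁻¹ * mu ^ n * ‖v‖ ≤ ‖B v‖)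
    (hangF : ∀ v ∈ F, ∀ w ∈ F', max ‖v‖ ‖w‖ ≤ (d : ℝ) * ‖v + w‖)
    (hAB : ‖A - B‖ ≤ lam ^ n)
    (u : EuclideanSpace ℝ (Fin d)) (hu : u ∈ E) (hu1 : ‖u‖ = 1) :
    infDist u (F : Set (EuclideanSpace ℝ (Fin d))) ≤
      (2 + (d : ℝ)) * C ^ 2 * (lam / mu) ^ n := by
  obtain ⟨v, w, hv, hw, hvw⟩ := Submodule.codisjoint_iff_exists_add_eq.mp hFF'.codisjoint u
  have hln : (0:ℝ) < lam ^ n := pow_pos hlam n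
  have hmn : (0:ℝ) < mu ^ n := pow_pos hmu n
  have hC0 : (0:ℝ) < C := lt_of_lt_of_le one_pos hC
  have hvd : ‖v‖ ≤ (d : ℝ) := by
    have := hangF v hv w hw
    rw [hvw, hu1, mul_one] at this
    exact le_trans (le_max_left _ _) this
  have hAu : ‖A u‖ ≤ C * lam ^ n := by
    have := hA₁ u hu; rwa [hu1, mul_one] at this
  have hABu : ‖(A - B) u‖ ≤ lam ^ n := by
    calc ‖(A - B) u‖ ≤ ‖A - B‖ * ‖u‖ := (A - B).le_opNorm u
    _ ≤ lam ^ n := by rw [hu1, mul_one]; exact hAB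
  have hBu : ‖B u‖ ≤ C * lam ^ n + lam ^ n := by
    have : B u = A u - (A - B) u := by simp
    rw [this]
    exact le_trans (norm_sub_le _ _) (add_le_add hAu hABu)
  have hBv : ‖B v‖ ≤ C * lam ^ n * d := by
    calc ‖B v‖ ≤ C * lam ^ n * ‖v‖ := hB₁ v hv
    _ ≤ C * lam ^ n * d := by
        exact mul_le_mul_of_nonneg_left hvd (by positivity)
  have hBw : ‖B w‖ ≤ (2 + (d : ℝ)) * C * lam ^ n := by
    have hw' : B w = B u - B v := by rw [← hvw]; simp
    calc ‖B w‖ = ‖B u - B v‖ := by rw [hw']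
    _ ≤ ‖B u‖ + ‖B v‖ := norm_sub_le _ _
    _ ≤ (C * lam ^ n + lam ^ n) + C * lam ^ n * d := add_le_add hBu hBv
    _ ≤ (2 + (d : ℝ)) * C * lam ^ n := by nlinarith [hln, hC]
  have hwle : ‖w‖ ≤ (2 + (d : ℝ)) * C ^ 2 * (lam / mu) ^ n := by
    have h1 : C⁻¹ * mu ^ n * ‖w‖ ≤ (2 + (d : ℝ)) * C * lam ^ n :=
      le_trans (hB₂ w hw) hBw
    have h2 : ‖w‖ ≤ (2 + (d : ℝ)) * C ^ 2 * lam ^ n / mu ^ n := by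
      rw [le_div_iff₀ hmn]
      have := mul_le_mul_of_nonneg_left h1 hC0.le
      calc ‖w‖ * mu ^ n = C * (C⁻¹ * mu ^ n * ‖w‖) := by
            field_simp
      _ ≤ C * ((2 + (d : ℝ)) * C * lam ^ n) :=
            mul_le_mul_of_nonneg_left h1 hC0.le
      _ = (2 + (d : ℝ)) * C ^ 2 * lam ^ n := by ring
    calc ‖w‖ ≤ (2 + (d : ℝ)) * C ^ 2 * lam ^ n / mu ^ n := h2
    _ = (2 + (d : ℝ)) * C ^ 2 * (lam / mu) ^ n := by
        rw [div_pow]; ring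
  calc infDist u (F : Set (EuclideanSpace ℝ (Fin d))) ≤ dist u v :=
        infDist_le_dist_of_mem hv
  _ = ‖u - v‖ := by rw [dist_eq_norm]
  _ = ‖w‖ := by rw [← hvw]; congr 1; abel
  _ ≤ _ := hwle

/-- Brin's lemma: let `(A_n)_{n≥1}` and `(B_n)_{n≥1}` be sequences of `d×d` matrices
(`d > 0`) such that for some `0 < λ < μ` and `C ≥ 1` there are splittings
`ℝ^d = E ⊕ E' = F ⊕ F'` with:
(1) `‖A_n u‖ ≤ Cλⁿ‖u‖` on `E` and `C⁻¹μⁿ‖v‖ ≤ ‖A_n v‖` on `E'`;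
(2) `‖B_n u‖ ≤ Cλⁿ‖u‖` on `F` and `C⁻¹μⁿ‖v‖ ≤ ‖B_n v‖` on `F'`;
(3) `max{‖v‖,‖w‖} ≤ d‖v+w‖` for `v ∈ E, w ∈ E'` or `v ∈ F, w ∈ F'`.
Then for each pair `(δ, a) ∈ (0,1] × [λ,∞)` with `(λ/a)^{n+1} < δ ≤ (λ/a)^n` and
`‖A_n − B_n‖ ≤ δaⁿ`, one has
`d(E, F) ≤ (2+d)·C²·(μ/λ)·δ^{log(μ/λ)/log(a/λ)}`. -/
theorem brin_subspace_distance {d : ℕ} (hd : 0 < d)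
    (A B : ℕ → EuclideanSpace ℝ (Fin d) →L[ℝ] EuclideanSpace ℝ (Fin d))
    (lam mu C : ℝ) (hlam : 0 < lam) (hlammu : lam < mu) (hC : 1 ≤ C)
    (E E' F F' : Submodule ℝ (EuclideanSpace ℝ (Fin d)))
    (hEE' : IsCompl E E') (hFF' : IsCompl F F')
    (hA₁ : ∀ n : ℕ, 1 ≤ n → ∀ u ∈ E, ‖A n u‖ ≤ C * lam ^ n * ‖u‖)
    (hA₂ : ∀ n : ℕ, 1 ≤ n → ∀ v ∈ E', C⁻¹ * mu ^ n * ‖v‖ ≤ ‖A n v‖)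
    (hB₁ : ∀ n : ℕ, 1 ≤ n → ∀ u ∈ F, ‖B n u‖ ≤ C * lam ^ n * ‖u‖)
    (hB₂ : ∀ n : ℕ, 1 ≤ n → ∀ v ∈ F', C⁻¹ * mu ^ n * ‖v‖ ≤ ‖B n v‖)
    (hangE : ∀ v ∈ E, ∀ w ∈ E', max ‖v‖ ‖w‖ ≤ (d : ℝ) * ‖v + w‖)
    (hangF : ∀ v ∈ F, ∀ w ∈ F', max ‖v‖ ‖w‖ ≤ (d : ℝ) * ‖v + w‖) :
    ∀ (δ a : ℝ) (n : ℕ), 1 ≤ n → 0 < δ → δ ≤ 1 → lam ≤ a →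
      (lam / a) ^ (n + 1) < δ → δ ≤ (lam / a) ^ n →
      ‖A n - B n‖ ≤ δ * a ^ n →
      subDist E F ≤
        (2 + (d : ℝ)) * C ^ 2 * (mu / lam) *
          δ ^ (Real.log (mu / lam) / Real.log (a / lam)) := by
  intro δ a n hn hδ0 hδ1 hla h1 h2 hAB
  have hmu : 0 < mu := hlam.trans hlammu
  have ha0 : 0 < a := hlam.trans_le hla
  -- a > lam
  have hlalt : lam < a := by
    by_contra h
    push_neg at h
    have heq : a = lam := le_antisymm h hla
    rw [heq, div_self hlam.ne', one_pow] at h1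
    rw [heq, div_self hlam.ne', one_pow] at h2
    exact absurd h1 (not_lt.2 hδ1)
  set e : ℝ := Real.log (mu / lam) / Real.log (a / lam) with he
  have hlog_a : 0 < Real.log (a / lam) :=
    Real.log_pos (by rw [lt_div_iff₀ hlam]; linarith)
  have hlog_mu : 0 < Real.log (mu / lam) :=
    Real.log_pos (by rw [lt_div_iff₀ hlam]; linarith)
  have he0 : 0 < e := div_pos hlog_mu hlog_a
  have hx0 : (0:ℝ) < lam / a := div_pos hlam ha0
  -- (lam/a)^e = lam/mu
  have hkey : (lam / a) ^ e = lam / mu := by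
    rw [Real.rpow_def_of_pos hx0]
    have hlx : Real.log (lam / a) = - Real.log (a / lam) := by
      rw [← Real.log_inv, inv_div]
    rw [hlx, he]
    have : -Real.log (a / lam) * (Real.log (mu / lam) / Real.log (a / lam))
        = - Real.log (mu / lam) := by
      field_simp
    rw [this, ← Real.log_inv, inv_div, Real.exp_log (div_pos hlam hmu)]
  -- δ^e ≥ (lam/mu)^(n+1)
  have hδe : (lam / mu) ^ (n + 1) ≤ δ ^ e := by
    have hb : ((lam / a) ^ (n + 1) : ℝ) ^ e ≤ δ ^ e :=
      Real.rpow_le_rpow (by positivity) h1.le he0.le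
    calc (lam / mu) ^ (n + 1) = ((lam / a) ^ e) ^ (n + 1) := by rw [hkey]
    _ = ((lam / a) ^ (n + 1) : ℝ) ^ e := by
        rw [← Real.rpow_natCast ((lam / a) ^ e) (n + 1),
          ← Real.rpow_natCast (lam / a) (n + 1),
          ← Real.rpow_mul hx0.le, ← Real.rpow_mul hx0.le, mul_comm]
    _ ≤ δ ^ e := hb
  -- pointwise bound constant
  have hmain : (2 + (d : ℝ)) * C ^ 2 * (lam / mu) ^ n ≤
      (2 + (d : ℝ)) * C ^ 2 * (mu / lam) * δ ^ e := by
    have hd0 : (0:ℝ) ≤ 2 + (d : ℝ) := by positivity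
    have hC0 : (0:ℝ) < C := lt_of_lt_of_le one_pos hC
    have h3 : (lam / mu) ^ n ≤ (mu / lam) * δ ^ e := by
      calc (lam / mu) ^ n = (mu / lam) * (lam / mu) ^ (n + 1) := by
            have hml : mu / lam * (lam / mu) = 1 := by
              rw [div_mul_div_comm, mul_comm mu lam]; exact div_self (by positivity)
            rw [pow_succ, mul_comm ((lam / mu) ^ n) (lam / mu), ← mul_assoc, hml, one_mul]
      _ ≤ (mu / lam) * δ ^ e :=
            mul_le_mul_of_nonneg_left hδe (by positivity)
    calc (2 + (d : ℝ)) * C ^ 2 * (lam / mu) ^ n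
        ≤ (2 + (d : ℝ)) * C ^ 2 * ((mu / lam) * δ ^ e) :=
          mul_le_mul_of_nonneg_left h3 (by positivity)
    _ = (2 + (d : ℝ)) * C ^ 2 * (mu / lam) * δ ^ e := by ring
  have hRHS0 : 0 ≤ (2 + (d : ℝ)) * C ^ 2 * (mu / lam) * δ ^ e := by positivity
  -- the operator norm bounds
  have hABn : ‖A n - B n‖ ≤ lam ^ n := by
    have : δ * a ^ n ≤ lam ^ n := by
      have := mul_le_mul_of_nonneg_right h2 (le_of_lt (pow_pos ha0 n))
      calc δ * a ^ n ≤ (lam / a) ^ n * a ^ n := this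
      _ = lam ^ n := by rw [div_pow]; field_simp
    exact hAB.trans this
  have hBAn : ‖B n - A n‖ ≤ lam ^ n := by rwa [norm_sub_rev]
  rw [subDist]
  apply max_le
  · apply Real.iSup_le _ hRHS0
    rintro ⟨w, hwF, hw1⟩
    exact le_trans (brin_aux hd (B n) (A n) lam mu C hlam hmu hC F E E'
      hEE' n (hB₁ n hn) (hA₁ n hn) (hA₂ n hn) hangE hBAn w hwF hw1) hmain
  · apply Real.iSup_le _ hRHS0
    rintro ⟨v, hvE, hv1⟩
    exact le_trans (brin_aux hd (A n) (B n) lam mu C hlam hmu hC E F F'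
      hFF' n (hA₁ n hn) (hB₁ n hn) (hB₂ n hn) hangF hABn v hvE hv1) hmain
end
end

section
/- Let E be an m-dimensional subspace of ℝ^d with orthonormal basis {v₁,…,v_m}, and let A be a real d×d matrix with A ≠ 0. Let G be the m×m Gram matrix with entries G_{ij} = ⟨A v_i, A v_j⟩, so that √(det G) = |det(A|E)| is the volume distortion of A restricted to E. Then for every v ∈ E with ‖v‖ = 1, ‖A v‖ ≥ ‖A‖^{1−m}·√(det G). Consequently, if A is injective on E, then ‖(A|E)^{−1}‖ ≤ ‖A‖^{m−1}/√(det G), where (A|E)^{−1}: A(E) → E is the inverse of the restriction of A to E. -/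
set_option synthInstance.maxHeartbeats 1000000
set_option maxHeartbeats 1000000

noncomputable section

open Finset Matrix

/-- Bilinear expansion of inner products of linear combinations. -/
lemma inner_sum_sum' {d m : ℕ} (x : Fin m → EuclideanSpace ℝ (Fin d)) (c c' : Fin m → ℝ) :
    (inner ℝ (∑ j, c j • x j) (∑ k, c' k • x k) : ℝ)
      = ∑ j, ∑ k, c j * c' k * (inner ℝ (x j) (x k) : ℝ) := by
  rw [sum_inner]
  refine Finset.sum_congr rfl fun j _ => ?_
  rw [inner_sum]
  refine Finset.sum_congr rfl fun k _ => ?_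
  rw [real_inner_smul_left, real_inner_smul_right]
  ring

lemma norm_sq_sum_orthonormal {d m : ℕ} {w : Fin m → EuclideanSpace ℝ (Fin d)}
    (hw : Orthonormal ℝ w) (c : Fin m → ℝ) :
    ‖∑ j, c j • w j‖ ^ 2 = ∑ j, c j ^ 2 := by
  rw [← real_inner_self_eq_norm_sq, inner_sum_sum']
  rw [orthonormal_iff_ite] at hw
  refine Finset.sum_congr rfl fun j _ => ?_
  simp [hw, mul_ite, Finset.sum_ite_eq, sq]

lemma quad_form_eq {d m : ℕ} (A : EuclideanSpace ℝ (Fin d) →L[ℝ] EuclideanSpace ℝ (Fin d))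
    (w : Fin m → EuclideanSpace ℝ (Fin d)) (c : Fin m → ℝ) :
    c ⬝ᵥ ((Matrix.of fun i j => (inner ℝ (A (w i)) (A (w j)) : ℝ)) *ᵥ c)
      = ‖A (∑ j, c j • w j)‖ ^ 2 := by
  have hA : A (∑ j, c j • w j) = ∑ j, c j • A (w j) := by
    rw [map_sum]; simp only [ContinuousLinearMap.map_smul]
  rw [← real_inner_self_eq_norm_sq, hA, inner_sum_sum' (fun j => A (w j)) c c]
  simp only [dotProduct, Matrix.mulVec, dotProduct, Matrix.of_apply]
  rw [Finset.sum_comm]  -- maybe unnecessary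
  refine Finset.sum_congr rfl fun j _ => ?_
  rw [Finset.mul_sum]
  refine Finset.sum_congr rfl fun k _ => ?_
  rw [real_inner_comm (A (w k)) (A (w j))]; ring

lemma gram_key {d m : ℕ} (A : EuclideanSpace ℝ (Fin d) →L[ℝ] EuclideanSpace ℝ (Fin d))
    {w : Fin m → EuclideanSpace ℝ (Fin d)} (hw : Orthonormal ℝ w) (i0 : Fin m) :
    Real.sqrt (Matrix.det (Matrix.of fun i j => (inner ℝ (A (w i)) (A (w j)) : ℝ)))
      ≤ ‖A (w i0)‖ * ‖A‖ ^ (m - 1) := by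
  set G' : Matrix (Fin m) (Fin m) ℝ := Matrix.of fun i j => (inner ℝ (A (w i)) (A (w j)) : ℝ)
    with hG'
  have hherm : G'.IsHermitian := by
    refine Matrix.ext fun i j => ?_
    simp [G', Matrix.conjTranspose_apply, real_inner_comm, mul_comm]
  set lam := hherm.eigenvalues with hlam
  -- each eigenvalue is the squared norm of A applied to a unit vector
  have heig : ∀ i, ∃ y : EuclideanSpace ℝ (Fin d), ‖y‖ = 1 ∧ lam i = ‖A y‖ ^ 2 := by
    intro i
    set c : Fin m → ℝ := ⇑(hherm.eigenvectorBasis i) with hc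
    have hcsum : ∑ j, c j ^ 2 = 1 := by
      have h1 : ‖hherm.eigenvectorBasis i‖ = 1 := hherm.eigenvectorBasis.orthonormal.1 i
      have h2 : (inner ℝ (hherm.eigenvectorBasis i) (hherm.eigenvectorBasis i) : ℝ) = 1 := by
        rw [real_inner_self_eq_norm_sq, h1]; norm_num
      rw [← h2, PiLp.inner_apply]
      simp [sq, c]
    refine ⟨∑ j, c j • w j, ?_, ?_⟩
    · have := norm_sq_sum_orthonormal hw c
      rw [hcsum] at this
      nlinarith [norm_nonneg (∑ j, c j • w j)]
    · have hmv : G' *ᵥ c = lam i • c := hherm.mulVec_eigenvectorBasis i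
      have h3 : c ⬝ᵥ (G' *ᵥ c) = lam i := by
        rw [hmv, dotProduct_smul, smul_eq_mul]
        have : c ⬝ᵥ c = 1 := by
          rw [dotProduct]
          simpa [sq] using hcsum
        rw [this, mul_one]
      rw [← h3, quad_form_eq]
  have hlam_nonneg : ∀ i, 0 ≤ lam i := fun i => by
    obtain ⟨y, _, hy2⟩ := heig i; rw [hy2]; positivity
  have hlam_le : ∀ i, lam i ≤ ‖A‖ ^ 2 := fun i => by
    obtain ⟨y, hy1, hy2⟩ := heig i
    rw [hy2]
    have := A.le_opNorm y
    rw [hy1, mul_one] at this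
    exact pow_le_pow_left₀ (norm_nonneg _) this 2
  -- min eigenvalue bounded by the (i0,i0) diagonal entry
  set U : Matrix (Fin m) (Fin m) ℝ := (hherm.eigenvectorUnitary : Matrix (Fin m) (Fin m) ℝ)
    with hU
  have hUU : U * star U = 1 := Matrix.mem_unitaryGroup_iff.mp hherm.eigenvectorUnitary.2
  have hrow : ∑ k, (U i0 k) ^ 2 = 1 := by
    have := congrFun (congrFun hUU i0) i0
    rw [Matrix.mul_apply] at this
    simpa [Matrix.star_apply, sq, Matrix.one_apply] using this
  have h00 : G' i0 i0 = ∑ k, lam k * (U i0 k) ^ 2 := by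
    conv_lhs => rw [hherm.spectral_theorem, Unitary.conjStarAlgAut_apply]
    rw [Matrix.mul_apply]
    refine Finset.sum_congr rfl fun k _ => ?_
    rw [Matrix.mul_diagonal]
    simp [Matrix.star_apply, U, sq]
    ring
  obtain ⟨i1, _, hi1⟩ := Finset.exists_min_image Finset.univ lam ⟨i0, Finset.mem_univ i0⟩
  have hmin : lam i1 ≤ ‖A (w i0)‖ ^ 2 := by
    have h1 : lam i1 = ∑ k, lam i1 * (U i0 k) ^ 2 := by
      rw [← Finset.mul_sum, hrow, mul_one]
    have h2 : ∑ k, lam i1 * (U i0 k) ^ 2 ≤ ∑ k, lam k * (U i0 k) ^ 2 :=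
      Finset.sum_le_sum fun k _ => by
        exact mul_le_mul_of_nonneg_right (hi1 k (Finset.mem_univ k)) (sq_nonneg _)
    have h3 : G' i0 i0 = ‖A (w i0)‖ ^ 2 := by
      show (inner ℝ (A (w i0)) (A (w i0)) : ℝ) = _
      exact real_inner_self_eq_norm_sq _
    linarith [h00 ▸ h2, h1]
  have hdet : G'.det = ∏ i, lam i := by
    have := hherm.det_eq_prod_eigenvalues
    simpa using this
  have hdetle : G'.det ≤ ‖A (w i0)‖ ^ 2 * (‖A‖ ^ 2) ^ (m - 1) := by
    rw [hdet, ← Finset.mul_prod_erase Finset.univ lam (Finset.mem_univ i1)]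
    have hprod : ∏ i ∈ Finset.univ.erase i1, lam i ≤ (‖A‖ ^ 2) ^ (m - 1) := by
      have : ∏ i ∈ Finset.univ.erase i1, lam i ≤ ∏ i ∈ Finset.univ.erase i1, ‖A‖ ^ 2 :=
        Finset.prod_le_prod (fun i _ => hlam_nonneg i) (fun i _ => hlam_le i)
      rwa [Finset.prod_const, Finset.card_erase_of_mem (Finset.mem_univ i1),
        Finset.card_univ, Fintype.card_fin] at this
    exact mul_le_mul hmin hprod
      (Finset.prod_nonneg fun i _ => hlam_nonneg i) (sq_nonneg _)
  calc Real.sqrt G'.det ≤ Real.sqrt (‖A (w i0)‖ ^ 2 * (‖A‖ ^ 2) ^ (m - 1)) :=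
        Real.sqrt_le_sqrt hdetle
    _ = ‖A (w i0)‖ * ‖A‖ ^ (m - 1) := by
        rw [show ‖A (w i0)‖ ^ 2 * (‖A‖ ^ 2) ^ (m - 1) = (‖A (w i0)‖ * ‖A‖ ^ (m - 1)) ^ 2 by ring]
        exact Real.sqrt_sq (by positivity)

lemma inner_map_sum_sum {d m : ℕ} (A : EuclideanSpace ℝ (Fin d) →L[ℝ] EuclideanSpace ℝ (Fin d))
    (x : Fin m → EuclideanSpace ℝ (Fin d)) (c c' : Fin m → ℝ) :
    (inner ℝ (A (∑ j, c j • x j)) (A (∑ k, c' k • x k)) : ℝ)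
      = ∑ j, ∑ k, c j * c' k * (inner ℝ (A (x j)) (A (x k)) : ℝ) := by
  rw [map_sum, map_sum]
  simp only [ContinuousLinearMap.map_smul]
  exact inner_sum_sum' (fun j => A (x j)) c c'

lemma sum_inner_smul_eq {d m : ℕ} {v : Fin m → EuclideanSpace ℝ (Fin d)}
    (hv : Orthonormal ℝ v) {x : EuclideanSpace ℝ (Fin d)}
    (hx : x ∈ Submodule.span ℝ (Set.range v)) :
    ∑ i, (inner ℝ (v i) x : ℝ) • v i = x := by
  have hv' := orthonormal_iff_ite.mp hv
  induction hx using Submodule.span_induction with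
  | mem y hy =>
      obtain ⟨i0, rfl⟩ := hy
      simp [hv', ite_smul, Finset.sum_ite_eq]
  | zero => simp
  | add y z hy hz ihy ihz =>
      simp only [inner_add_right, add_smul, Finset.sum_add_distrib, ihy, ihz]
  | smul a y hy ih =>
      simp only [real_inner_smul_right, mul_smul, ← Finset.smul_sum, ih]

lemma gram_det_congr {d m : ℕ} (A : EuclideanSpace ℝ (Fin d) →L[ℝ] EuclideanSpace ℝ (Fin d))
    {v w : Fin m → EuclideanSpace ℝ (Fin d)} (hv : Orthonormal ℝ v) (hw : Orthonormal ℝ w)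
    (hwv : ∀ j, w j ∈ Submodule.span ℝ (Set.range v)) :
    (Matrix.of fun i j => (inner ℝ (A (w i)) (A (w j)) : ℝ)).det
      = (Matrix.of fun i j => (inner ℝ (A (v i)) (A (v j)) : ℝ)).det := by
  set C : Matrix (Fin m) (Fin m) ℝ := Matrix.of fun i j => (inner ℝ (v i) (w j) : ℝ) with hCdef
  set Gv : Matrix (Fin m) (Fin m) ℝ := Matrix.of fun i j => (inner ℝ (A (v i)) (A (v j)) : ℝ)
    with hGv
  have hwexp : ∀ j, w j = ∑ i, C i j • v i := fun j => (sum_inner_smul_eq hv (hwv j)).symm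
  have hmul : (Matrix.of fun i j => (inner ℝ (A (w i)) (A (w j)) : ℝ)) = Cᵀ * Gv * C := by
    refine Matrix.ext fun j k => ?_
    show (inner ℝ (A (w j)) (A (w k)) : ℝ) = _
    conv_lhs => rw [hwexp j, hwexp k]
    rw [inner_map_sum_sum A v (fun i => C i j) (fun l => C l k)]
    rw [Matrix.mul_apply]
    rw [Finset.sum_comm]
    refine Finset.sum_congr rfl fun l _ => ?_
    rw [Matrix.mul_apply, Finset.sum_mul]
    refine Finset.sum_congr rfl fun i _ => ?_
    simp only [Matrix.transpose_apply, hGv, Matrix.of_apply]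
    ring
  have hC : Cᵀ * C = 1 := by
    have hw' := orthonormal_iff_ite.mp hw
    have hv' := orthonormal_iff_ite.mp hv
    refine Matrix.ext fun j k => ?_
    rw [Matrix.mul_apply]
    have h1 : (inner ℝ (w j) (w k) : ℝ) = ∑ i, C i j * C i k := by
      conv_lhs => rw [hwexp j, hwexp k]
      rw [inner_sum_sum' v (fun i => C i j) (fun l => C l k)]
      refine Finset.sum_congr rfl fun i _ => ?_
      simp [hv', mul_ite, Finset.sum_ite_eq]
    have h2 : ∑ i, Cᵀ j i * C i k = ∑ i, C i j * C i k := by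
      simp [Matrix.transpose_apply]
    rw [h2, ← h1, hw', Matrix.one_apply]
  have h2 : C.det * C.det = 1 := by
    have := congrArg Matrix.det hC
    rwa [Matrix.det_mul, Matrix.det_transpose, Matrix.det_one] at this
  rw [hmul, Matrix.det_mul, Matrix.det_mul, Matrix.det_transpose]
  linear_combination Gv.det * h2

/-- Let `E` be an `m`-dimensional subspace of `ℝ^d` with orthonormal basis `v₁, …, v_m`,
let `A ≠ 0` be a `d×d` matrix (as a linear operator of `ℝ^d`), and let `G` be the `m×m`
Gram matrix `G_{ij} = ⟨A vᵢ, A vⱼ⟩`, so that `√(det G) = |det(A|E)|` is the volume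
distortion of `A` restricted to `E`.  Then `‖A u‖ ≥ ‖A‖^{1−m}·√(det G)` for every unit
vector `u ∈ E`; consequently, if `A` is injective on `E`, then
`‖(A|E)^{−1}‖ ≤ ‖A‖^{m−1}/√(det G)`, i.e. `‖u‖ ≤ (‖A‖^{m−1}/√(det G))·‖A u‖`
for every `u ∈ E`. -/
theorem norm_apply_ge_of_orthonormal_basis {d m : ℕ}
    (E : Submodule ℝ (EuclideanSpace ℝ (Fin d)))
    (v : Fin m → EuclideanSpace ℝ (Fin d))
    (hon : Orthonormal ℝ v) (hspan : Submodule.span ℝ (Set.range v) = E)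
    (A : EuclideanSpace ℝ (Fin d) →L[ℝ] EuclideanSpace ℝ (Fin d)) (hA : A ≠ 0)
    (G : Matrix (Fin m) (Fin m) ℝ)
    (hG : ∀ i j, G i j = (inner ℝ (A (v i)) (A (v j)) : ℝ)) :
    (∀ u ∈ E, ‖u‖ = 1 →
        ‖A u‖ ≥ ‖A‖ ^ ((1 : ℝ) - (m : ℝ)) * Real.sqrt G.det) ∧
    ((∀ u ∈ E, A u = 0 → u = 0) →
      ∀ u ∈ E, ‖u‖ ≤ ‖A‖ ^ ((m : ℝ) - 1) / Real.sqrt G.det * ‖A u‖) := by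
  have hGeq : G = Matrix.of fun i j => (inner ℝ (A (v i)) (A (v j)) : ℝ) :=
    Matrix.ext fun i j => hG i j
  have hApos : (0 : ℝ) < ‖A‖ := norm_pos_iff.mpr hA
  rcases Nat.eq_zero_or_pos m with hm | hm
  · -- m = 0 : E is trivial
    subst hm
    have hE : E = ⊥ := by
      rw [← hspan]
      simp [Set.range_eq_empty]
    constructor
    · intro u hu hnorm
      rw [hE, Submodule.mem_bot] at hu
      rw [hu] at hnorm
      simp at hnorm
    · intro _ u hu
      rw [hE, Submodule.mem_bot] at hu
      subst hu
      simp
  · -- m ≥ 1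
    have key1 : ∀ u ∈ E, ‖u‖ = 1 →
        ‖A u‖ ≥ ‖A‖ ^ ((1 : ℝ) - (m : ℝ)) * Real.sqrt G.det := by
      intro u hu hnorm
      -- finrank of E is m
      have hfin : Module.finrank ℝ E = m := by
        rw [← hspan]
        simpa using finrank_span_eq_card hon.linearIndependent
      -- orthonormal extension of u inside E
      set u' : E := ⟨u, hu⟩ with hu'
      have hnorm' : ‖u'‖ = 1 := hnorm
      set i₀ : Fin m := ⟨0, hm⟩ with hi₀
      have hcard : Module.finrank ℝ E = Fintype.card (Fin m) := by simpa using hfin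
      have honu : Orthonormal ℝ (Set.restrict {i₀} (fun _ : Fin m => u')) := by
        rw [orthonormal_iff_ite]
        intro i j
        have hij : i = j := Subtype.ext (by
          have hi := i.2; have hj := j.2
          simp only [Set.mem_singleton_iff] at hi hj
          rw [hi, hj])
        subst hij
        rw [if_pos rfl]
        show inner ℝ u' u' = 1
        rw [real_inner_self_eq_norm_sq, hnorm']
        norm_num
      obtain ⟨b, hb⟩ := honu.exists_orthonormalBasis_extension_of_card_eq hcard
      have hb0 : b i₀ = u' := hb i₀ rfl
      set w : Fin m → EuclideanSpace ℝ (Fin d) := fun i => (b i : EuclideanSpace ℝ (Fin d))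
        with hw
      have honw : Orthonormal ℝ w := by
        rw [orthonormal_iff_ite]
        intro i j
        have := orthonormal_iff_ite.mp b.orthonormal i j
        rwa [Submodule.coe_inner] at this
      have hwv : ∀ j, w j ∈ Submodule.span ℝ (Set.range v) := fun j => by
        rw [hspan]; exact (b j).2
      have hdet : G.det = (Matrix.of fun i j => (inner ℝ (A (w i)) (A (w j)) : ℝ)).det := by
        rw [hGeq]
        exact (gram_det_congr A hon honw hwv).symm
      have hkey := gram_key A honw i₀
      rw [← hdet] at hkey
      have hw0 : w i₀ = u := by rw [hw]; simp [hb0, hu']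
      rw [hw0] at hkey
      -- convert between rpow and monomials
      have hpow : ‖A‖ ^ ((1 : ℝ) - (m : ℝ)) = (‖A‖ ^ (m - 1 : ℕ))⁻¹ := by
        rw [← Real.rpow_natCast ‖A‖ (m - 1), ← Real.rpow_neg hApos.le]
        congr 1
        rw [Nat.cast_sub hm]
        push_cast
        ring
      rw [ge_iff_le, hpow, inv_mul_le_iff₀ (by positivity)]
      calc Real.sqrt G.det ≤ ‖A u‖ * ‖A‖ ^ (m - 1 : ℕ) := hkey
        _ = ‖A‖ ^ (m - 1 : ℕ) * ‖A u‖ := by ring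
    refine ⟨key1, ?_⟩
    intro hinj u hu
    -- G is positive definite
    have hposdef : G.PosDef := by
      rw [Matrix.posDef_iff_dotProduct_mulVec]
      constructor
      · refine Matrix.ext fun i j => ?_
        simp only [Matrix.conjTranspose_apply, hG, star_trivial]
        exact real_inner_comm _ _
      · intro c hc
        have hq : star c ⬝ᵥ (G *ᵥ c) = ‖A (∑ j, c j • v j)‖ ^ 2 := by
          rw [star_trivial, hGeq]
          exact quad_form_eq A v c
        rw [hq]
        have hsum : (∑ j, c j • v j) ∈ E := by
          rw [← hspan]
          exact Submodule.sum_mem _ fun j _ =>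
            Submodule.smul_mem _ _ (Submodule.subset_span (Set.mem_range_self j))
        have hne : (∑ j, c j • v j) ≠ 0 := by
          intro h0
          apply hc
          have := norm_sq_sum_orthonormal hon c
          rw [h0] at this
          simp only [norm_zero] at this
          funext j
          have h1 : (0:ℝ) ≤ c j ^ 2 := sq_nonneg _
          have h2 : ∑ j, c j ^ 2 = 0 := by linarith [this]
          have := (Finset.sum_eq_zero_iff_of_nonneg (fun j _ => sq_nonneg (c j))).mp h2 j
            (Finset.mem_univ j)
          exact pow_eq_zero_iff (by norm_num) |>.mp (this)
        have hAne : A (∑ j, c j • v j) ≠ 0 := fun h0 => hne (hinj _ hsum h0)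
        exact pow_pos (norm_pos_iff.mpr hAne) 2
    have hdetpos : 0 < G.det := hposdef.det_pos
    have hsqrtpos : 0 < Real.sqrt G.det := Real.sqrt_pos.mpr hdetpos
    rcases eq_or_ne u 0 with rfl | hu0
    · simp
    · have hupos : (0:ℝ) < ‖u‖ := norm_pos_iff.mpr hu0
      set u₁ : EuclideanSpace ℝ (Fin d) := ‖u‖⁻¹ • u with hu₁
      have hu₁E : u₁ ∈ E := Submodule.smul_mem _ _ hu
      have hu₁n : ‖u₁‖ = 1 := by
        rw [hu₁, norm_smul, norm_inv, norm_norm, inv_mul_cancel₀ hupos.ne']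
      have h1 := key1 u₁ hu₁E hu₁n
      have hAu₁ : ‖A u₁‖ = ‖u‖⁻¹ * ‖A u‖ := by
        rw [A.map_smul, norm_smul, norm_inv, norm_norm]
      rw [ge_iff_le, hAu₁] at h1
      set a : ℝ := ‖A‖ ^ ((1:ℝ) - (m:ℝ)) * Real.sqrt G.det with ha
      have hapos : 0 < a := by
        apply mul_pos _ hsqrtpos
        exact Real.rpow_pos_of_pos hApos _
      have h2 : ‖u‖ * a ≤ ‖A u‖ := by
        have h3 : ‖u‖ * a ≤ ‖u‖ * (‖u‖⁻¹ * ‖A u‖) := mul_le_mul_of_nonneg_left h1 hupos.le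
        have h4 : ‖u‖ * (‖u‖⁻¹ * ‖A u‖) = ‖A u‖ := by field_simp
        linarith
      have hform : ‖A‖ ^ ((m:ℝ) - 1) / Real.sqrt G.det = a⁻¹ := by
        rw [ha, mul_inv, show ((m:ℝ) - 1) = -((1:ℝ) - (m:ℝ)) by ring,
          Real.rpow_neg hApos.le, div_eq_mul_inv]
      rw [hform]
      calc ‖u‖ = ‖u‖ * a * a⁻¹ := by field_simp
        _ ≤ ‖A u‖ * a⁻¹ := mul_le_mul_of_nonneg_right h2 (inv_nonneg.mpr hapos.le)
        _ = a⁻¹ * ‖A u‖ := by ring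
end
end
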